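/- arXiv:2006.03538 — 6 statements merged into one kernel-verified Lean document; each statement's English description precedes it below -/
import Mathlib

section
/- Let u, v be linearly independent unit vectors in ℝ² and let f = (f₁, f₂) be a vector field on ℝ² with f₁, f₂ ∈ C²_c(ℝ²). Then L f(x) = 0 for all x ∈ ℝ² if and only if there exists a continuously differentiable scalar function V : ℝ² → ℝ with f = ∇V on all of ℝ². -/
open MeasureTheory Matrix

noncomputable section

/-- Dot product on ℝ². -/
def dot2 (u v : ℝ × ℝ) : ℝ := u.1 * v.1 + u.2 * v.2

/-- `x^⊥ = (-x₂, x₁)`. -/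
def perp2 (x : ℝ × ℝ) : ℝ × ℝ := (-x.2, x.1)

/-- Divergent beam transform `X_u h (x) = ∫₀^∞ h(x + t u) dt`. -/
def Xbeam (u : ℝ × ℝ) (h : ℝ × ℝ → ℝ) (x : ℝ × ℝ) : ℝ :=
  ∫ t in Set.Ioi (0 : ℝ), h (x + t • u)

/-- First moment divergent beam transform `X¹_u h (x) = ∫₀^∞ t h(x + t u) dt`. -/
def Xmom (u : ℝ × ℝ) (h : ℝ × ℝ → ℝ) (x : ℝ × ℝ) : ℝ :=
  ∫ t in Set.Ioi (0 : ℝ), t * h (x + t • u)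

/-- Directional derivative `D_u h = u · ∇ h`. -/
def Ddir (u : ℝ × ℝ) (h : ℝ × ℝ → ℝ) (x : ℝ × ℝ) : ℝ := fderiv ℝ h x u

/-- Twice continuously differentiable, compactly supported. -/
def IsC2c (h : ℝ × ℝ → ℝ) : Prop := ContDiff ℝ 2 h ∧ HasCompactSupport h

/-- `div f = ∂f₁/∂x₁ + ∂f₂/∂x₂`. -/
def divf (f₁ f₂ : ℝ × ℝ → ℝ) (x : ℝ × ℝ) : ℝ :=
  fderiv ℝ f₁ x (1, 0) + fderiv ℝ f₂ x (0, 1)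

/-- `curl f = ∂f₂/∂x₁ - ∂f₁/∂x₂`. -/
def curlf (f₁ f₂ : ℝ × ℝ → ℝ) (x : ℝ × ℝ) : ℝ :=
  fderiv ℝ f₂ x (1, 0) - fderiv ℝ f₁ x (0, 1)

/-- Longitudinal V-line transform `L f = -X_u (f·u) + X_v (f·v)`. -/
def VlineL (u v : ℝ × ℝ) (f₁ f₂ : ℝ × ℝ → ℝ) (x : ℝ × ℝ) : ℝ :=
  - Xbeam u (fun y => f₁ y * u.1 + f₂ y * u.2) x
  + Xbeam v (fun y => f₁ y * v.1 + f₂ y * v.2) x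

/-- Transverse V-line transform `T f = -X_u (f·u^⊥) + X_v (f·v^⊥)`. -/
def VlineT (u v : ℝ × ℝ) (f₁ f₂ : ℝ × ℝ → ℝ) (x : ℝ × ℝ) : ℝ :=
  - Xbeam u (fun y => f₁ y * (perp2 u).1 + f₂ y * (perp2 u).2) x
  + Xbeam v (fun y => f₁ y * (perp2 v).1 + f₂ y * (perp2 v).2) x

/-- First moment longitudinal V-line transform `I f = -X¹_u (f·u) + X¹_v (f·v)`. -/
def VmomL (u v : ℝ × ℝ) (f₁ f₂ : ℝ × ℝ → ℝ) (x : ℝ × ℝ) : ℝ :=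
  - Xmom u (fun y => f₁ y * u.1 + f₂ y * u.2) x
  + Xmom v (fun y => f₁ y * v.1 + f₂ y * v.2) x

/-- First moment transverse V-line transform `J f = -X¹_u (f·u^⊥) + X¹_v (f·v^⊥)`. -/
def VmomT (u v : ℝ × ℝ) (f₁ f₂ : ℝ × ℝ → ℝ) (x : ℝ × ℝ) : ℝ :=
  - Xmom u (fun y => f₁ y * (perp2 u).1 + f₂ y * (perp2 u).2) x
  + Xmom v (fun y => f₁ y * (perp2 v).1 + f₂ y * (perp2 v).2) x

/-- Radon transform `R h (ψ, s) = ∫_ℝ h (s ψ + t ψ^⊥) dt`. -/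
def Radon2 (h : ℝ × ℝ → ℝ) (ψ : ℝ × ℝ) (s : ℝ) : ℝ :=
  ∫ t : ℝ, h (s • ψ + t • perp2 ψ)

/-- The (vector-valued) star transform. -/
def starS (m : ℕ) (γ : Fin m → ℝ × ℝ) (c : Fin m → ℝ)
    (f₁ f₂ : ℝ × ℝ → ℝ) (x : ℝ × ℝ) : ℝ × ℝ :=
  ∑ i, c i •
    (Xbeam (γ i) (fun y => f₁ y * (γ i).1 + f₂ y * (γ i).2) x,
     Xbeam (γ i) (fun y => f₁ y * (perp2 (γ i)).1 + f₂ y * (perp2 (γ i)).2) x)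

/-- `γ(ψ) = -∑ cᵢ γᵢ / (ψ·γᵢ)`. -/
def starGamma (m : ℕ) (γ : Fin m → ℝ × ℝ) (c : Fin m → ℝ) (ψ : ℝ × ℝ) : ℝ × ℝ :=
  - ∑ i, (c i / dot2 ψ (γ i)) • γ i

/-- A star configuration is symmetric if `m = 2k` and, after re-indexing by a
permutation, `γᵢ = -γ_{k+i}` and `cᵢ = -c_{k+i}` for `i = 1, …, k`. -/
def StarSymmetric (m : ℕ) (γ : Fin m → ℝ × ℝ) (c : Fin m → ℝ) : Prop :=
  ∃ k : ℕ, ∃ hk : m = 2 * k, ∃ σ : Equiv.Perm (Fin m),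
    ∀ i : Fin m, ∀ hi : (i : ℕ) < k,
      γ (σ i) = - γ (σ ⟨(i : ℕ) + k, by omega⟩) ∧
      c (σ i) = - c (σ ⟨(i : ℕ) + k, by omega⟩)

open Metric Set

/-- radius outside of which a compactly supported function vanishes -/
lemma exists_radius {g : ℝ × ℝ → ℝ} (hg : HasCompactSupport g) :
    ∃ R : ℝ, 0 < R ∧ ∀ y : ℝ × ℝ, R ≤ ‖y‖ → g y = 0 := by
  obtain ⟨r, hr⟩ := hg.isCompact.isBounded.subset_closedBall 0
  refine ⟨max r 0 + 1, by positivity, fun y hy => ?_⟩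
  apply image_eq_zero_of_notMem_tsupport
  intro hmem
  have h1 : ‖y‖ ≤ r := by simpa [mem_closedBall_zero_iff] using hr hmem
  have h2 : r ≤ max r 0 := le_max_left _ _
  linarith

/-- truncation of the divergent beam transform -/
lemma xbeam_trunc {u : ℝ × ℝ} {g : ℝ × ℝ → ℝ} (hgc : Continuous g)
    {x : ℝ × ℝ} {T : ℝ} (hT : 0 < T)
    (hzero : ∀ t : ℝ, T < t → g (x + t • u) = 0) :
    Xbeam u g x = ∫ t in Set.Ioc 0 T, g (x + t • u) := by
  have hcont : Continuous fun t : ℝ => g (x + t • u) :=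
    hgc.comp (continuous_const.add (continuous_id.smul continuous_const))
  have h2 : ∫ t in Set.Ioi T, g (x + t • u) = 0 := by
    rw [MeasureTheory.setIntegral_congr_fun measurableSet_Ioi
      (fun t ht => hzero t ht)]
    simp
  unfold Xbeam
  rw [← Set.Ioc_union_Ioi_eq_Ioi hT.le,
    MeasureTheory.setIntegral_union (Set.Ioc_disjoint_Ioi le_rfl) measurableSet_Ioi
      (hcont.integrableOn_Ioc) ?_, h2, add_zero]
  exact (integrableOn_congr_fun (fun t ht => hzero t ht) measurableSet_Ioi).mpr
    (integrableOn_zero)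

lemma norm_line_lower (x : ℝ × ℝ) (t : ℝ) (u : ℝ × ℝ) (ht : 0 ≤ t) :
    t * ‖u‖ - ‖x‖ ≤ ‖x + t • u‖ := by
  have h1 : ‖t • u‖ ≤ ‖x + t • u‖ + ‖x‖ := by
    have := norm_sub_le (x + t • u) x
    simpa using this
  rw [norm_smul, Real.norm_eq_abs, abs_of_nonneg ht] at h1
  linarith

lemma xbeam_deriv {u : ℝ × ℝ} (hu : u ≠ 0) {g : ℝ × ℝ → ℝ}
    (hg : ContDiff ℝ 1 g) (hgs : HasCompactSupport g) (x₀ : ℝ × ℝ) :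
    ∃ L : (ℝ × ℝ) →L[ℝ] ℝ, HasFDerivAt (Xbeam u g) L x₀ ∧ L u = - g x₀ := by
  obtain ⟨R, hR0, hRz⟩ := exists_radius hgs
  have hu0 : 0 < ‖u‖ := norm_pos_iff.mpr hu
  set T : ℝ := (‖x₀‖ + 1 + R) / ‖u‖ with hTdef
  have hTpos : 0 < T := by positivity
  have hTmul : T * ‖u‖ = ‖x₀‖ + 1 + R := div_mul_cancel₀ _ hu0.ne'
  have hgc : Continuous g := hg.continuous
  -- vanishing beyond T for x in ball x₀ 1
  have hvan : ∀ x ∈ ball x₀ 1, ∀ t : ℝ, T < t → g (x + t • u) = 0 := by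
    intro x hx t ht
    apply hRz
    have hb : ‖x‖ < ‖x₀‖ + 1 := by
      have := mem_ball_iff_norm.mp hx
      have h2 := norm_sub_le x x₀  -- not quite; use triangle
      calc ‖x‖ = ‖x₀ + (x - x₀)‖ := by ring_nf
        _ ≤ ‖x₀‖ + ‖x - x₀‖ := norm_add_le _ _
        _ < ‖x₀‖ + 1 := by linarith
    have h3 := norm_line_lower x t u (by linarith [hTpos] : (0:ℝ) ≤ t)
    have h4 : T * ‖u‖ < t * ‖u‖ := by
      exact mul_lt_mul_of_pos_right ht hu0
    rw [hTmul] at h4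
    linarith
  -- derivative data
  have hfc : Continuous (fderiv ℝ g) := hg.continuous_fderiv one_ne_zero
  obtain ⟨C, hC⟩ := hfc.bounded_above_of_compact_support (hgs.fderiv ℝ)
  have hline : ∀ x : ℝ × ℝ, Continuous fun t : ℝ => x + t • u := fun x =>
    continuous_const.add (continuous_id.smul continuous_const)
  have hdiff : ∀ (t : ℝ) (x : ℝ × ℝ),
      HasFDerivAt (fun x => g (x + t • u)) (fderiv ℝ g (x + t • u)) x := by
    intro t x
    have h1 : HasFDerivAt g (fderiv ℝ g (x + t • u)) (x + t • u) :=
      (hg.differentiable one_ne_zero (x + t • u)).hasFDerivAt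
    have h2 : HasFDerivAt (fun y : ℝ × ℝ => y + t • u)
        (ContinuousLinearMap.id ℝ (ℝ × ℝ)) x := (hasFDerivAt_id x).add_const _
    simpa [Function.comp_def] using h1.comp x h2
  -- dominated differentiation
  have key : HasFDerivAt (fun x => ∫ t in Set.Ioc 0 T, g (x + t • u))
      (∫ t in Set.Ioc 0 T, fderiv ℝ g (x₀ + t • u)) x₀ := by
    apply hasFDerivAt_integral_of_dominated_of_fderiv_le (s := ball x₀ 1)
      (F' := fun x t => fderiv ℝ g (x + t • u)) (bound := fun _ => C) (ball_mem_nhds x₀ one_pos)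
    · exact Filter.Eventually.of_forall fun x =>
        ((hgc.comp (hline x)).aestronglyMeasurable)
    · exact (hgc.comp (hline x₀)).integrableOn_Ioc
    · exact ((hfc.comp (hline x₀)).aestronglyMeasurable)
    · exact Filter.Eventually.of_forall fun t x _ => hC _
    · exact integrableOn_const measure_Ioc_lt_top.ne
    · exact Filter.Eventually.of_forall fun t x _ => hdiff t x
  set L : (ℝ × ℝ) →L[ℝ] ℝ := ∫ t in Set.Ioc 0 T, fderiv ℝ g (x₀ + t • u)
  refine ⟨L, ?_, ?_⟩
  · apply key.congr_of_eventuallyEq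
    filter_upwards [ball_mem_nhds x₀ one_pos] with x hx
    exact xbeam_trunc hgc hTpos (hvan x hx)
  · -- L u = - g x₀
    have hint : IntegrableOn (fun t => fderiv ℝ g (x₀ + t • u)) (Set.Ioc 0 T) :=
      (hfc.comp (hline x₀)).integrableOn_Ioc
    have h1 : L u = ∫ t in Set.Ioc 0 T, fderiv ℝ g (x₀ + t • u) u :=
      ContinuousLinearMap.integral_apply hint u
    have h2 : (∫ t in Set.Ioc 0 T, fderiv ℝ g (x₀ + t • u) u)
        = ∫ t in (0:ℝ)..T, fderiv ℝ g (x₀ + t • u) u :=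
      (intervalIntegral.integral_of_le hTpos.le).symm
    have hψ : ∀ t ∈ Set.uIcc (0:ℝ) T,
        HasDerivAt (fun t : ℝ => g (x₀ + t • u)) (fderiv ℝ g (x₀ + t • u) u) t := by
      intro t _
      have hcurve : HasDerivAt (fun t : ℝ => x₀ + t • u) u t := by
        simpa using ((hasDerivAt_id t).smul_const u).const_add x₀
      exact HasFDerivAt.comp_hasDerivAt t
        ((hg.differentiable one_ne_zero _).hasFDerivAt) hcurve
    have h3 : (∫ t in (0:ℝ)..T, fderiv ℝ g (x₀ + t • u) u)
        = g (x₀ + T • u) - g (x₀ + (0:ℝ) • u) := by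
      apply intervalIntegral.integral_eq_sub_of_hasDerivAt hψ
      apply Continuous.intervalIntegrable
      exact ((hfc.comp (hline x₀)).clm_apply continuous_const)
    have h4 : g (x₀ + T • u) = 0 := by
      apply hRz
      have := norm_line_lower x₀ T u hTpos.le
      rw [hTmul] at this; linarith
    rw [h1, h2, h3, h4]
    simp

/-- decompose directional fderiv into partials -/
lemma fderiv_apply_eq (V : ℝ × ℝ → ℝ) (y : ℝ × ℝ) (w : ℝ × ℝ) :
    fderiv ℝ V y w = w.1 * fderiv ℝ V y (1, 0) + w.2 * fderiv ℝ V y (0, 1) := by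
  have hw : w = w.1 • ((1:ℝ), (0:ℝ)) + w.2 • ((0:ℝ), (1:ℝ)) := by
    ext <;> simp
  conv_lhs => rw [hw]
  rw [map_add, _root_.map_smul, _root_.map_smul]
  simp [smul_eq_mul]

/-- constancy along a segment where the directional derivative vanishes -/
lemma segment_const {V : ℝ × ℝ → ℝ} (hV : ContDiff ℝ 1 V) (p q : ℝ × ℝ)
    (h : ∀ l ∈ Set.Icc (0:ℝ) 1, fderiv ℝ V (p + l • (q - p)) (q - p) = 0) :
    V q = V p := by
  have hψ : ∀ l ∈ Set.uIcc (0:ℝ) 1,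
      HasDerivAt (fun l : ℝ => V (p + l • (q - p))) 0 l := by
    intro l hl
    rw [Set.uIcc_of_le zero_le_one] at hl
    have hcurve : HasDerivAt (fun l : ℝ => p + l • (q - p)) (q - p) l := by
      simpa using ((hasDerivAt_id l).smul_const (q - p)).const_add p
    have := HasFDerivAt.comp_hasDerivAt l
      ((hV.differentiable one_ne_zero _).hasFDerivAt) hcurve
    rw [h l hl] at this
    exact this
  have := intervalIntegral.integral_eq_sub_of_hasDerivAt hψ
    (intervalIntegrable_const (c := (0:ℝ)))
  simp at this
  linarith

/-- points on the u-v segment are uniformly away from 0 -/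
lemma seg_norm_pos {u v : ℝ × ℝ} (huv : LinearIndependent ℝ ![u, v]) :
    ∃ δ : ℝ, 0 < δ ∧ ∀ l ∈ Set.Icc (0:ℝ) 1, δ ≤ ‖u + l • (v - u)‖ := by
  have hcont : ContinuousOn (fun l : ℝ => ‖u + l • (v - u)‖) (Set.Icc 0 1) :=
    (continuous_norm.comp
      (continuous_const.add (continuous_id.smul continuous_const))).continuousOn
  obtain ⟨l₀, hl₀, hmin⟩ := (isCompact_Icc (a := (0:ℝ)) (b := 1)).exists_isMinOn
    ⟨0, by norm_num⟩ hcont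
  refine ⟨‖u + l₀ • (v - u)‖, ?_, fun l hl => hmin hl⟩
  rw [norm_pos_iff]
  intro hzero
  have h2 : (1 - l₀) • u + l₀ • v = 0 := by
    rw [sub_smul, one_smul, smul_sub] at *
    rw [← hzero]; abel
  obtain ⟨h3, h4⟩ := LinearIndependent.pair_iff.mp huv _ _ h2
  rw [sub_eq_zero] at h3
  exact one_ne_zero (h3.trans h4)

/-- u is nonzero -/
lemma u_ne_zero {u v : ℝ × ℝ} (huv : LinearIndependent ℝ ![u, v]) : u ≠ 0 := by
  have := huv.ne_zero 0
  simpa using this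

lemma v_ne_zero {u v : ℝ × ℝ} (huv : LinearIndependent ℝ ![u, v]) : v ≠ 0 := by
  have := huv.ne_zero 1
  simpa using this


/-- `L f ≡ 0` iff `f = ∇V` for some `C¹` scalar function `V`. -/
theorem stmt0 (u v : ℝ × ℝ) (hu : u.1 ^ 2 + u.2 ^ 2 = 1) (hv : v.1 ^ 2 + v.2 ^ 2 = 1)
    (huv : LinearIndependent ℝ ![u, v])
    (f₁ f₂ : ℝ × ℝ → ℝ) (hf₁ : IsC2c f₁) (hf₂ : IsC2c f₂) :
    (∀ x, VlineL u v f₁ f₂ x = 0) ↔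
      ∃ V : ℝ × ℝ → ℝ, ContDiff ℝ 1 V ∧
        ∀ x, f₁ x = fderiv ℝ V x (1, 0) ∧ f₂ x = fderiv ℝ V x (0, 1) := by
  have hune : u ≠ 0 := u_ne_zero huv
  have hvne : v ≠ 0 := v_ne_zero huv
  set g₁ : ℝ × ℝ → ℝ := fun y => f₁ y * u.1 + f₂ y * u.2 with hg₁def
  set g₂ : ℝ × ℝ → ℝ := fun y => f₁ y * v.1 + f₂ y * v.2 with hg₂def
  have hVL : ∀ x, VlineL u v f₁ f₂ x = - Xbeam u g₁ x + Xbeam v g₂ x := fun x => rfl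
  have hf₁c : ContDiff ℝ 1 f₁ := hf₁.1.of_le (by norm_num)
  have hf₂c : ContDiff ℝ 1 f₂ := hf₂.1.of_le (by norm_num)
  have hg₁c : ContDiff ℝ 1 g₁ := (hf₁c.mul contDiff_const).add (hf₂c.mul contDiff_const)
  have hg₂c : ContDiff ℝ 1 g₂ := (hf₁c.mul contDiff_const).add (hf₂c.mul contDiff_const)
  have hg₁s : HasCompactSupport g₁ := hf₁.2.mul_right.add hf₂.2.mul_right
  have hg₂s : HasCompactSupport g₂ := hf₁.2.mul_right.add hf₂.2.mul_right
  constructor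
  · -- forward
    intro h0
    have heq : Xbeam u g₁ = Xbeam v g₂ := by
      funext x
      have := h0 x
      rw [hVL x] at this
      linarith
    set V : ℝ × ℝ → ℝ := fun x => - Xbeam u g₁ x with hVdef
    have hcard : Fintype.card (Fin 2) = Module.finrank ℝ (ℝ × ℝ) := by simp
    set B := basisOfLinearIndependentOfCardEqFinrank huv hcard with hBdef
    set Φ : (ℝ × ℝ) → (ℝ × ℝ) →L[ℝ] ℝ := fun x =>
      f₁ x • ContinuousLinearMap.fst ℝ ℝ ℝ + f₂ x • ContinuousLinearMap.snd ℝ ℝ ℝ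
      with hΦdef
    have hΦapp : ∀ x w, Φ x w = f₁ x * w.1 + f₂ x * w.2 := by
      intro x w; simp [hΦdef]
    have hkey : ∀ x, HasFDerivAt V (Φ x) x := by
      intro x
      obtain ⟨L₁, h₁, h₁u⟩ := xbeam_deriv hune hg₁c hg₁s x
      obtain ⟨L₂, h₂, h₂v⟩ := xbeam_deriv hvne hg₂c hg₂s x
      have h₂' : HasFDerivAt (Xbeam u g₁) L₂ x := heq ▸ h₂
      have hL : L₁ = L₂ := h₁.unique h₂'
      have hVd : HasFDerivAt V (-L₁) x := h₁.neg
      have hEq : -L₁ = Φ x := by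
        apply ContinuousLinearMap.coe_injective
        apply B.ext
        intro i
        have hB : B i = ![u, v] i :=
          congrFun (coe_basisOfLinearIndependentOfCardEqFinrank huv hcard) i
        rw [hB]
        fin_cases i
        · simp only [Matrix.cons_val_zero]
          show (-L₁) u = Φ x u
          rw [hΦapp]
          simp only [ContinuousLinearMap.neg_apply, h₁u, neg_neg]
          rfl
        · simp only [Matrix.cons_val_one, Matrix.head_cons]
          show (-L₁) v = Φ x v
          rw [hΦapp, hL]
          simp only [ContinuousLinearMap.neg_apply, h₂v, neg_neg]
          rfl
      rwa [hEq] at hVd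
    refine ⟨V, ?_, fun x => ?_⟩
    · rw [contDiff_one_iff_fderiv]
      refine ⟨fun x => (hkey x).differentiableAt, ?_⟩
      have hfd : (fderiv ℝ V) = Φ := funext fun x => (hkey x).fderiv
      rw [hfd]
      exact (hf₁c.continuous.smul continuous_const).add
        (hf₂c.continuous.smul continuous_const)
    · rw [(hkey x).fderiv]
      constructor <;> · rw [hΦapp]; simp
  · -- backward
    rintro ⟨V, hV, hVgrad⟩ x
    have hgu : ∀ y, g₁ y = fderiv ℝ V y u := by
      intro y
      rw [fderiv_apply_eq V y u, ← (hVgrad y).1, ← (hVgrad y).2, hg₁def]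
      ring
    have hgv : ∀ y, g₂ y = fderiv ℝ V y v := by
      intro y
      rw [fderiv_apply_eq V y v, ← (hVgrad y).1, ← (hVgrad y).2, hg₂def]
      ring
    obtain ⟨R₁, hR₁0, hR₁⟩ := exists_radius hf₁.2
    obtain ⟨R₂, hR₂0, hR₂⟩ := exists_radius hf₂.2
    set R : ℝ := max R₁ R₂ with hRdef
    have hgrad0 : ∀ y : ℝ × ℝ, R ≤ ‖y‖ → ∀ w, fderiv ℝ V y w = 0 := by
      intro y hy w
      rw [fderiv_apply_eq V y w, ← (hVgrad y).1, ← (hVgrad y).2,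
        hR₁ y (le_trans (le_max_left _ _) hy), hR₂ y (le_trans (le_max_right _ _) hy)]
      ring
    obtain ⟨δ, hδ0, hδ⟩ := seg_norm_pos huv
    set m : ℝ := min ‖u‖ (min ‖v‖ δ) with hmdef
    have hm0 : 0 < m := lt_min (norm_pos_iff.mpr hune) (lt_min (norm_pos_iff.mpr hvne) hδ0)
    set S : ℝ := (‖x‖ + R + 1) / m with hSdef
    have hS0 : 0 < S := by positivity
    have hSm : S * m = ‖x‖ + R + 1 := div_mul_cancel₀ _ hm0.ne'
    have hfar : ∀ (w : ℝ × ℝ) (t : ℝ), m ≤ ‖w‖ → S ≤ t → R + 1 ≤ ‖x + t • w‖ := by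
      intro w t hw hSt
      have h1 := norm_line_lower x t w (le_trans hS0.le hSt)
      have h2 : S * m ≤ t * ‖w‖ := by
        calc S * m ≤ t * m := mul_le_mul_of_nonneg_right hSt hm0.le
          _ ≤ t * ‖w‖ := mul_le_mul_of_nonneg_left hw (le_trans hS0.le hSt)
      rw [hSm] at h2
      linarith
    have hbeam : ∀ (w : ℝ × ℝ) (g : ℝ × ℝ → ℝ), m ≤ ‖w‖ →
        (∀ y, g y = fderiv ℝ V y w) → Continuous g →
        Xbeam w g x = V (x + S • w) - V x := by
      intro w g hw hgrad hgc
      have hzero : ∀ t : ℝ, S < t → g (x + t • w) = 0 := by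
        intro t ht
        rw [hgrad]
        have := hfar w t hw ht.le
        rw [hgrad0 _ (by linarith)]
      rw [xbeam_trunc hgc hS0 hzero, ← intervalIntegral.integral_of_le hS0.le]
      have hψ : ∀ t ∈ Set.uIcc (0:ℝ) S,
          HasDerivAt (fun t : ℝ => V (x + t • w)) (g (x + t • w)) t := by
        intro t _
        have hcurve : HasDerivAt (fun t : ℝ => x + t • w) w t := by
          simpa using ((hasDerivAt_id t).smul_const w).const_add x
        have := HasFDerivAt.comp_hasDerivAt t
          ((hV.differentiable one_ne_zero (x + t • w)).hasFDerivAt) hcurve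
        rw [← hgrad] at this
        exact this
      rw [intervalIntegral.integral_eq_sub_of_hasDerivAt hψ
        ((hgc.comp (continuous_const.add (continuous_id.smul continuous_const))).intervalIntegrable 0 S)]
      simp
    have h₁ := hbeam u g₁ (min_le_left _ _) hgu hg₁c.continuous
    have h₂ := hbeam v g₂ (le_trans (min_le_right _ _) (min_le_left _ _)) hgv hg₂c.continuous
    have hseg : V (x + S • v) = V (x + S • u) := by
      apply segment_const hV
      intro l hl
      have hpt : (x + S • u) + l • ((x + S • v) - (x + S • u))
          = x + S • (u + l • (v - u)) := by
        module
      rw [hpt]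
      apply hgrad0
      have hδl := hδ l hl
      have := hfar (u + l • (v - u)) S (le_trans (le_trans (min_le_right _ _) (min_le_right _ _)) hδl) le_rfl
      linarith
    rw [hVL x, h₁, h₂, hseg]
    ring
end
end

section
/- Let u, v be linearly independent unit vectors in ℝ² and let f = (f₁, f₂) be a vector field on ℝ² with f₁, f₂ ∈ C²_c(ℝ²). Then T f(x) = 0 for all x ∈ ℝ² if and only if div f(x) = 0 for all x ∈ ℝ². -/
open MeasureTheory Matrix

noncomputable section

/-! ### Auxiliary lemmas -/

section Aux

open Set

/-- Composition of a compactly supported function with a line has compact support. -/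
lemma line_cs {g : ℝ × ℝ → ℝ} (hg : HasCompactSupport g) {w : ℝ × ℝ} (hw : w ≠ 0)
    (x : ℝ × ℝ) : HasCompactSupport fun t : ℝ => g (x + t • w) := by
  have hww : w.1 * w.1 + w.2 * w.2 ≠ 0 := by
    intro h
    apply hw
    have h1 : w.1 = 0 ∧ w.2 = 0 := by
      constructor <;> nlinarith [sq_nonneg w.1, sq_nonneg w.2]
    exact Prod.ext h1.1 h1.2
  set ℓ : ℝ × ℝ → ℝ := fun y => ((y.1 - x.1) * w.1 + (y.2 - x.2) * w.2) / (w.1 * w.1 + w.2 * w.2)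
    with hℓ
  have hcont : Continuous ℓ := by fun_prop
  have hK : IsCompact (ℓ '' tsupport g) := hg.image hcont
  apply IsCompact.of_isClosed_subset hK (isClosed_tsupport _)
  apply closure_minimal _ hK.isClosed
  intro t ht
  refine ⟨x + t • w, subset_tsupport _ ht, ?_⟩
  simp only [hℓ, Prod.fst_add, Prod.snd_add, Prod.smul_fst, Prod.smul_snd, smul_eq_mul]
  rw [div_eq_iff hww]
  ring

/-- Composition of a compactly supported function with an affine plane parametrization
has compact support, provided the directions are independent. -/
lemma plane_cs {g : ℝ × ℝ → ℝ} (hg : HasCompactSupport g) {u v : ℝ × ℝ}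
    (hd : u.1 * v.2 - u.2 * v.1 ≠ 0) (x : ℝ × ℝ) :
    HasCompactSupport fun p : ℝ × ℝ => g (x + p.1 • u + p.2 • v) := by
  set d := u.1 * v.2 - u.2 * v.1 with hdd
  set ℓ : ℝ × ℝ → ℝ × ℝ := fun y =>
    (((y.1 - x.1) * v.2 - (y.2 - x.2) * v.1) / d, (u.1 * (y.2 - x.2) - u.2 * (y.1 - x.1)) / d)
    with hℓ
  have hcont : Continuous ℓ := by fun_prop
  have hK : IsCompact (ℓ '' tsupport g) := hg.image hcont
  apply IsCompact.of_isClosed_subset hK (isClosed_tsupport _)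
  apply closure_minimal _ hK.isClosed
  intro p hp
  refine ⟨x + p.1 • u + p.2 • v, subset_tsupport _ hp, ?_⟩
  simp only [hℓ, Prod.fst_add, Prod.snd_add, Prod.smul_fst, Prod.smul_snd, smul_eq_mul]
  have hiff : ∀ a b : ℝ, (a, b) = p ↔ a = p.1 ∧ b = p.2 := by
    intro a b; constructor
    · intro h; exact ⟨congrArg Prod.fst h, congrArg Prod.snd h⟩
    · rintro ⟨h1, h2⟩; exact Prod.ext h1 h2
  rw [hiff]
  constructor <;> (field_simp; ring)

/-- `X_w (D_w h) = -h` for `h` of class `C¹` with compact support. -/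
lemma Xbeam_dir {h : ℝ × ℝ → ℝ} (hh : ContDiff ℝ 1 h) (hcs : HasCompactSupport h)
    {w : ℝ × ℝ} (hw : w ≠ 0) (x : ℝ × ℝ) :
    ∫ t in Set.Ioi (0 : ℝ), fderiv ℝ h (x + t • w) w = - h x := by
  have hφcs : HasCompactSupport fun t : ℝ => h (x + t • w) := line_cs hcs hw x
  have hline : ContDiff ℝ 1 fun t : ℝ => x + t • w := by fun_prop
  have hφ : ContDiff ℝ 1 fun t : ℝ => h (x + t • w) := hh.comp hline
  have hder : ∀ t : ℝ, HasDerivAt (fun t : ℝ => h (x + t • w)) (fderiv ℝ h (x + t • w) w) t := by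
    intro t
    have h1 : HasDerivAt (fun t : ℝ => x + t • w) w t := by
      simpa using ((hasDerivAt_id t).smul_const w).const_add x
    exact ((hh.differentiable one_ne_zero).differentiableAt.hasFDerivAt.comp_hasDerivAt t h1)
  have key := hφcs.integral_Ioi_deriv_eq hφ 0
  simp only [zero_smul, add_zero] at key
  rw [← key]
  apply setIntegral_congr_fun measurableSet_Ioi
  intro t _
  exact ((hder t).deriv).symm

/-- A continuous integrable function all of whose tail integrals vanish is zero. -/
lemma recover {φ : ℝ → ℝ} (hc : Continuous φ) (hi : Integrable φ)
    (h0 : ∀ a : ℝ, ∫ τ in Set.Ioi a, φ τ = 0) : ∀ b, φ b = 0 := by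
  have hIoc : ∀ a b : ℝ, a ≤ b → ∫ τ in Set.Ioc a b, φ τ = 0 := by
    intro a b hab
    have hsplit : ∫ τ in Set.Ioc a b ∪ Set.Ioi b, φ τ =
        (∫ τ in Set.Ioc a b, φ τ) + ∫ τ in Set.Ioi b, φ τ :=
      setIntegral_union (Set.Ioc_disjoint_Ioi le_rfl) measurableSet_Ioi
        hi.integrableOn hi.integrableOn
    rw [Set.Ioc_union_Ioi_eq_Ioi hab, h0 a, h0 b] at hsplit
    linarith
  have hF : (fun r : ℝ => ∫ τ in (0:ℝ)..r, φ τ) = fun _ => 0 := by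
    funext r
    rcases le_total (0:ℝ) r with h | h
    · rw [intervalIntegral.integral_of_le h]; exact hIoc 0 r h
    · rw [intervalIntegral.integral_of_ge h]; rw [hIoc r 0 h]; simp
  intro b
  have hd : HasDerivAt (fun r : ℝ => ∫ τ in (0:ℝ)..r, φ τ) (φ b) b :=
    intervalIntegral.integral_hasDerivAt_right hi.intervalIntegrable
      (hc.stronglyMeasurable.stronglyMeasurableAtFilter) hc.continuousAt
  rw [hF] at hd
  have := hd.unique (hasDerivAt_const b (0:ℝ))
  linarith

/-- Translation of a tail integral. -/
lemma shift_Ioi (φ : ℝ → ℝ) (a : ℝ) :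
    ∫ s in Set.Ioi (0:ℝ), φ (a + s) = ∫ τ in Set.Ioi a, φ τ := by
  have hemb : MeasurableEmbedding (fun s : ℝ => s + a) :=
    (MeasurableEquiv.addRight a).measurableEmbedding
  have hmap : Measure.map (fun s : ℝ => s + a) volume = volume :=
    map_add_right_eq_self volume a
  have key := hemb.setIntegral_map (f := fun s : ℝ => s + a) (g := φ) (s := Set.Ioi a)
    (μ := volume)
  rw [hmap] at key
  rw [key]
  have hpre : (fun s : ℝ => s + a) ⁻¹' Set.Ioi a = Set.Ioi 0 := by
    ext s; simp
  rw [hpre]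
  apply setIntegral_congr_fun measurableSet_Ioi
  intro s _
  simp [add_comm]

lemma param_bound {h₂ : ℝ × ℝ → ℝ} (hc : Continuous h₂) (hcs : HasCompactSupport h₂) :
    ∃ C R : ℝ, 0 ≤ C ∧ 0 < R ∧ (∀ p, ‖h₂ p‖ ≤ C) ∧
      (∀ p : ℝ × ℝ, R < ‖p‖ → h₂ p = 0) := by
  obtain ⟨C, hC⟩ := hcs.exists_bound_of_continuous hc
  obtain ⟨R, hR⟩ := hcs.isBounded.subset_closedBall 0
  refine ⟨C, max R 1, le_trans (norm_nonneg _) (hC 0), by positivity, hC, ?_⟩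
  intro p hp
  apply image_eq_zero_of_notMem_tsupport
  intro hmem
  have h1 := hR hmem
  simp only [Metric.mem_closedBall, dist_zero_right] at h1
  have h2 : R < R := lt_of_lt_of_le (lt_of_le_of_lt (le_max_left R 1) hp) h1
  exact lt_irrefl _ h2

/-- Continuity of a compactly supported parametric integral. -/
lemma param_cont {h₂ : ℝ × ℝ → ℝ} (hc : Continuous h₂) (hcs : HasCompactSupport h₂) :
    Continuous fun r : ℝ => ∫ t in Set.Ioi (0:ℝ), h₂ (r, t) := by
  obtain ⟨C, R, hC0, hR0, hC, hR⟩ := param_bound hc hcs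
  rw [continuous_iff_continuousAt]
  intro r₀
  apply continuousAt_of_dominated (bound := Set.indicator (Set.Icc (-R) R) fun _ => C)
  · filter_upwards with r
    exact ((hc.comp (by fun_prop :
      Continuous fun t : ℝ => ((r : ℝ), t))).aestronglyMeasurable).restrict
  · filter_upwards with r
    filter_upwards with t
    by_cases ht : t ∈ Set.Icc (-R) R
    · rw [Set.indicator_of_mem ht]; exact hC _
    · rw [Set.indicator_of_notMem ht]
      have htR : R < |t| := by
        simp only [Set.mem_Icc, not_and_or, not_le] at ht
        rcases ht with h | h
        · rw [abs_of_neg (by linarith)]; linarith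
        · rw [abs_of_pos (by linarith)]; linarith
      rw [hR (r, t)
        (lt_of_lt_of_le htR (by simp [Prod.norm_def, Real.norm_eq_abs, le_max_right]))]
      simp
  · rw [integrable_indicator_iff measurableSet_Icc]
    exact integrableOn_const measure_Icc_lt_top.ne
  · filter_upwards with t
    exact (hc.comp (by fun_prop : Continuous fun r : ℝ => (r, t))).continuousAt

/-- Compact support of a compactly supported parametric integral. -/
lemma param_cs {h₂ : ℝ × ℝ → ℝ} (hc : Continuous h₂) (hcs : HasCompactSupport h₂) :
    HasCompactSupport fun r : ℝ => ∫ t in Set.Ioi (0:ℝ), h₂ (r, t) := by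
  obtain ⟨C, R, hC0, hR0, hC, hR⟩ := param_bound hc hcs
  apply HasCompactSupport.intro (isCompact_Icc (a := -R) (b := R))
  intro r hr
  have hz : ∀ t : ℝ, h₂ (r, t) = 0 := by
    intro t
    apply hR
    have h1 : R < |r| := by
      simp only [Set.mem_Icc, not_and_or, not_le] at hr
      rcases hr with h | h
      · rw [abs_of_neg (by linarith)]; linarith
      · rw [abs_of_pos (by linarith)]; linarith
    exact lt_of_lt_of_le h1 (by simp [Prod.norm_def, Real.norm_eq_abs, le_max_left])
  simp [hz]

lemma fderiv_apply_expand {f : ℝ × ℝ → ℝ} {y : ℝ × ℝ} (w : ℝ × ℝ) :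
    fderiv ℝ f y w = w.1 * fderiv ℝ f y (1, 0) + w.2 * fderiv ℝ f y (0, 1) := by
  have hw : w = w.1 • ((1:ℝ), (0:ℝ)) + w.2 • ((0:ℝ), (1:ℝ)) := by
    apply Prod.ext <;> simp
  conv_lhs => rw [hw]
  rw [map_add, _root_.map_smul, _root_.map_smul]
  simp [smul_eq_mul]

lemma fderiv_comb {f₁ f₂ : ℝ × ℝ → ℝ} (h₁ : Differentiable ℝ f₁) (h₂ : Differentiable ℝ f₂)
    (a b : ℝ) (y w : ℝ × ℝ) :
    fderiv ℝ (fun z => f₁ z * a + f₂ z * b) y w =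
      a * fderiv ℝ f₁ y w + b * fderiv ℝ f₂ y w := by
  rw [fderiv_fun_add ((h₁ y).mul_const a) ((h₂ y).mul_const b),
    fderiv_mul_const (h₁ y), fderiv_mul_const (h₂ y)]
  simp [smul_eq_mul, mul_comm]

/-- The key pointwise identity:
`(u₁v₂ - u₂v₁) · div f = D_v (f·u^⊥) - D_u (f·v^⊥)`. -/
lemma keyid {f₁ f₂ : ℝ × ℝ → ℝ} (h₁ : Differentiable ℝ f₁) (h₂ : Differentiable ℝ f₂)
    (u v y : ℝ × ℝ) :
    (u.1 * v.2 - u.2 * v.1) * divf f₁ f₂ y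
      = fderiv ℝ (fun z => f₁ z * (perp2 u).1 + f₂ z * (perp2 u).2) y v
      - fderiv ℝ (fun z => f₁ z * (perp2 v).1 + f₂ z * (perp2 v).2) y u := by
  rw [fderiv_comb h₁ h₂, fderiv_comb h₁ h₂, fderiv_apply_expand (f := f₁) v,
    fderiv_apply_expand (f := f₂) v, fderiv_apply_expand (f := f₁) u,
    fderiv_apply_expand (f := f₂) u]
  simp only [divf, perp2]
  ring

lemma det_ne {u v : ℝ × ℝ} (hu : u.1 ^ 2 + u.2 ^ 2 = 1)
    (huv : LinearIndependent ℝ ![u, v]) : u.1 * v.2 - u.2 * v.1 ≠ 0 := by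
  intro hd
  rw [LinearIndependent.pair_iff] at huv
  by_cases h1 : u.1 ≠ 0
  · have := huv (-v.1) u.1 (by
      apply Prod.ext <;> simp [Prod.fst_add, Prod.snd_add] <;> nlinarith)
    exact h1 this.2
  · have h2 : u.2 ≠ 0 := by
      intro h2
      push_neg at h1
      rw [h1, h2] at hu
      norm_num at hu
    have := huv (-v.2) u.2 (by
      apply Prod.ext <;> simp [Prod.fst_add, Prod.snd_add] <;> nlinarith)
    exact h2 this.2

/-- The main integral identity: `T f (x) = d ∫∫ div f` over the wedge at `x`. -/
lemma keyA (u v : ℝ × ℝ) (hu0 : u ≠ 0) (hv0 : v ≠ 0) (d : ℝ) (hd : d = u.1*v.2 - u.2*v.1)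
    (hdne : u.1*v.2 - u.2*v.1 ≠ 0)
    (gu gv g : ℝ × ℝ → ℝ)
    (hgu1 : ContDiff ℝ 1 gu) (hgu_cs : HasCompactSupport gu)
    (hgv1 : ContDiff ℝ 1 gv) (hgv_cs : HasCompactSupport gv)
    (hg_c : Continuous g) (hg_cs : HasCompactSupport g)
    (hkey : ∀ y, d * g y = fderiv ℝ gu y v - fderiv ℝ gv y u)
    (x : ℝ × ℝ) :
    (- ∫ t in Set.Ioi (0:ℝ), gu (x + t • u)) + (∫ t in Set.Ioi (0:ℝ), gv (x + t • v))
      = d * ∫ s in Set.Ioi (0:ℝ), ∫ t in Set.Ioi (0:ℝ), g (x + s • u + t • v) := by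
  have hDgu_c : Continuous fun y => fderiv ℝ gu y v :=
    (hgu1.continuous_fderiv_apply one_ne_zero).comp (continuous_id.prodMk continuous_const)
  have hDgu_cs : HasCompactSupport fun y => fderiv ℝ gu y v := hgu_cs.fderiv_apply ℝ v
  have hDgv_c : Continuous fun y => fderiv ℝ gv y u :=
    (hgv1.continuous_fderiv_apply one_ne_zero).comp (continuous_id.prodMk continuous_const)
  have hDgv_cs : HasCompactSupport fun y => fderiv ℝ gv y u := hgv_cs.fderiv_apply ℝ u
  -- step 1 : rewrite inner integral
  have step1 : ∀ s : ℝ, (∫ t in Set.Ioi (0:ℝ), d * g (x + s • u + t • v))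
      = - gu (x + s • u) - ∫ t in Set.Ioi (0:ℝ), fderiv ℝ gv (x + s • u + t • v) u := by
    intro s
    have hI1 : IntegrableOn (fun t : ℝ => fderiv ℝ gu (x + s • u + t • v) v)
        (Set.Ioi (0:ℝ)) :=
      ((hDgu_c.comp (by fun_prop : Continuous fun t : ℝ => x + s • u + t • v)
        ).integrable_of_hasCompactSupport (line_cs hDgu_cs hv0 (x + s • u))).integrableOn
    have hI2 : IntegrableOn (fun t : ℝ => fderiv ℝ gv (x + s • u + t • v) u)
        (Set.Ioi (0:ℝ)) :=
      ((hDgv_c.comp (by fun_prop : Continuous fun t : ℝ => x + s • u + t • v)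
        ).integrable_of_hasCompactSupport (line_cs hDgv_cs hv0 (x + s • u))).integrableOn
    calc (∫ t in Set.Ioi (0:ℝ), d * g (x + s • u + t • v))
        = ∫ t in Set.Ioi (0:ℝ), (fderiv ℝ gu (x + s • u + t • v) v
            - fderiv ℝ gv (x + s • u + t • v) u) := by
          apply setIntegral_congr_fun measurableSet_Ioi
          intro t _
          exact hkey _
      _ = (∫ t in Set.Ioi (0:ℝ), fderiv ℝ gu (x + s • u + t • v) v)
            - ∫ t in Set.Ioi (0:ℝ), fderiv ℝ gv (x + s • u + t • v) u :=
          integral_sub hI1 hI2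
      _ = - gu (x + s • u) - ∫ t in Set.Ioi (0:ℝ), fderiv ℝ gv (x + s • u + t • v) u := by
          rw [Xbeam_dir hgu1 hgu_cs hv0 (x + s • u)]
  -- step 2 : Fubini for the second piece
  have hh₂c : Continuous fun p : ℝ × ℝ => fderiv ℝ gv (x + p.1 • u + p.2 • v) u :=
    hDgv_c.comp (by fun_prop)
  have hh₂cs : HasCompactSupport fun p : ℝ × ℝ => fderiv ℝ gv (x + p.1 • u + p.2 • v) u :=
    plane_cs hDgv_cs hdne x
  have step2 : (∫ s in Set.Ioi (0:ℝ), ∫ t in Set.Ioi (0:ℝ), fderiv ℝ gv (x + s • u + t • v) u)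
      = - ∫ t in Set.Ioi (0:ℝ), gv (x + t • v) := by
    have hIprod : Integrable (Function.uncurry fun s t : ℝ => fderiv ℝ gv (x + s • u + t • v) u)
        ((volume.restrict (Set.Ioi (0:ℝ))).prod (volume.restrict (Set.Ioi (0:ℝ)))) := by
      rw [Measure.prod_restrict]
      have hfull : Integrable (fun p : ℝ × ℝ => fderiv ℝ gv (x + p.1 • u + p.2 • v) u)
          (volume.prod volume) := by
        rw [← Measure.volume_eq_prod]
        exact hh₂c.integrable_of_hasCompactSupport hh₂cs
      exact hfull.restrict
    rw [integral_integral_swap hIprod]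
    have hswap : ∀ t : ℝ, (∫ s in Set.Ioi (0:ℝ), fderiv ℝ gv (x + s • u + t • v) u)
        = - gv (x + t • v) := by
      intro t
      have hpt : ∀ s : ℝ, x + s • u + t • v = (x + t • v) + s • u := by intro s; abel
      calc (∫ s in Set.Ioi (0:ℝ), fderiv ℝ gv (x + s • u + t • v) u)
          = ∫ s in Set.Ioi (0:ℝ), fderiv ℝ gv ((x + t • v) + s • u) u := by
            apply setIntegral_congr_fun measurableSet_Ioi
            intro s _
            simp only [hpt]
        _ = - gv (x + t • v) := Xbeam_dir hgv1 hgv_cs hu0 (x + t • v)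
    calc (∫ t in Set.Ioi (0:ℝ), ∫ s in Set.Ioi (0:ℝ), fderiv ℝ gv (x + s • u + t • v) u)
        = ∫ t in Set.Ioi (0:ℝ), - gv (x + t • v) := by
          apply setIntegral_congr_fun measurableSet_Ioi
          intro t _
          exact hswap t
      _ = - ∫ t in Set.Ioi (0:ℝ), gv (x + t • v) := integral_neg _
  -- assemble
  have lhs1 : d * (∫ s in Set.Ioi (0:ℝ), ∫ t in Set.Ioi (0:ℝ), g (x + s • u + t • v))
      = ∫ s in Set.Ioi (0:ℝ), ∫ t in Set.Ioi (0:ℝ), d * g (x + s • u + t • v) := by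
    simp only [← integral_const_mul]
  rw [lhs1]
  have hguline : IntegrableOn (fun s : ℝ => gu (x + s • u)) (Set.Ioi (0:ℝ)) :=
    (((hgu1.continuous).comp (by fun_prop : Continuous fun s : ℝ => x + s • u)
      ).integrable_of_hasCompactSupport (line_cs hgu_cs hu0 x)).integrableOn
  have hBc : Continuous fun s : ℝ =>
      ∫ t in Set.Ioi (0:ℝ), fderiv ℝ gv (x + s • u + t • v) u := param_cont hh₂c hh₂cs
  have hBcs : HasCompactSupport fun s : ℝ =>
      ∫ t in Set.Ioi (0:ℝ), fderiv ℝ gv (x + s • u + t • v) u := param_cs hh₂c hh₂cs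
  have hBint : IntegrableOn (fun s : ℝ =>
      ∫ t in Set.Ioi (0:ℝ), fderiv ℝ gv (x + s • u + t • v) u) (Set.Ioi (0:ℝ)) :=
    (hBc.integrable_of_hasCompactSupport hBcs).integrableOn
  calc (- ∫ t in Set.Ioi (0:ℝ), gu (x + t • u)) + (∫ t in Set.Ioi (0:ℝ), gv (x + t • v))
      = (∫ s in Set.Ioi (0:ℝ), - gu (x + s • u))
          - (- ∫ t in Set.Ioi (0:ℝ), gv (x + t • v)) := by
        rw [integral_neg]; ring
    _ = (∫ s in Set.Ioi (0:ℝ), - gu (x + s • u))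
          - ∫ s in Set.Ioi (0:ℝ), ∫ t in Set.Ioi (0:ℝ), fderiv ℝ gv (x + s • u + t • v) u := by
        rw [step2]
    _ = ∫ s in Set.Ioi (0:ℝ), (- gu (x + s • u)
          - ∫ t in Set.Ioi (0:ℝ), fderiv ℝ gv (x + s • u + t • v) u) := by
        have hneg : IntegrableOn (fun s : ℝ => - gu (x + s • u)) (Set.Ioi (0:ℝ)) :=
          hguline.neg
        exact (integral_sub hneg hBint).symm
    _ = ∫ s in Set.Ioi (0:ℝ), ∫ t in Set.Ioi (0:ℝ), d * g (x + s • u + t • v) := by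
        apply setIntegral_congr_fun measurableSet_Ioi
        intro s _
        exact (step1 s).symm



/-- If all wedge integrals of a continuous compactly supported function vanish,
the function vanishes. -/
lemma recovery_all {g : ℝ × ℝ → ℝ} (hg_c : Continuous g) (hg_cs : HasCompactSupport g)
    {u v : ℝ × ℝ} (hu0 : u ≠ 0) (hv0 : v ≠ 0) (hdne : u.1 * v.2 - u.2 * v.1 ≠ 0)
    (hG : ∀ x : ℝ × ℝ,
      (∫ s in Set.Ioi (0:ℝ), ∫ t in Set.Ioi (0:ℝ), g (x + s • u + t • v)) = 0) :
    ∀ y, g y = 0 := by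
  have claim1 : ∀ z : ℝ × ℝ, (∫ t in Set.Ioi (0:ℝ), g (z + t • v)) = 0 := by
    intro z
    have hh₂c : Continuous fun p : ℝ × ℝ => g (z + p.1 • u + p.2 • v) :=
      hg_c.comp (by fun_prop)
    have hh₂cs : HasCompactSupport fun p : ℝ × ℝ => g (z + p.1 • u + p.2 • v) :=
      plane_cs hg_cs hdne z
    have hφc : Continuous fun r : ℝ =>
        ∫ t in Set.Ioi (0:ℝ), g (z + r • u + t • v) := param_cont hh₂c hh₂cs
    have hφcs : HasCompactSupport fun r : ℝ =>
        ∫ t in Set.Ioi (0:ℝ), g (z + r • u + t • v) := param_cs hh₂c hh₂cs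
    have h0 : ∀ a : ℝ, (∫ τ in Set.Ioi a,
        ∫ t in Set.Ioi (0:ℝ), g (z + τ • u + t • v)) = 0 := by
      intro a
      rw [← shift_Ioi (fun r : ℝ => ∫ t in Set.Ioi (0:ℝ), g (z + r • u + t • v)) a]
      calc (∫ s in Set.Ioi (0:ℝ), ∫ t in Set.Ioi (0:ℝ), g (z + (a + s) • u + t • v))
          = ∫ s in Set.Ioi (0:ℝ), ∫ t in Set.Ioi (0:ℝ),
              g ((z + a • u) + s • u + t • v) := by
            apply setIntegral_congr_fun measurableSet_Ioi
            intro s _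
            apply setIntegral_congr_fun measurableSet_Ioi
            intro t _
            have hpt : z + (a + s) • u + t • v = (z + a • u) + s • u + t • v := by
              rw [add_smul]; abel
            simp only [hpt]
        _ = 0 := hG (z + a • u)
    have hrec := recover hφc (hφc.integrable_of_hasCompactSupport hφcs) h0 0
    simpa using hrec
  intro y
  have hφ₂c : Continuous fun τ : ℝ => g (y + τ • v) := hg_c.comp (by fun_prop)
  have hφ₂cs : HasCompactSupport fun τ : ℝ => g (y + τ • v) := line_cs hg_cs hv0 y
  have h0 : ∀ a : ℝ, (∫ τ in Set.Ioi a, g (y + τ • v)) = 0 := by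
    intro a
    rw [← shift_Ioi (fun τ : ℝ => g (y + τ • v)) a]
    calc (∫ s in Set.Ioi (0:ℝ), g (y + (a + s) • v))
        = ∫ s in Set.Ioi (0:ℝ), g ((y + a • v) + s • v) := by
          apply setIntegral_congr_fun measurableSet_Ioi
          intro s _
          have hpt : y + (a + s) • v = (y + a • v) + s • v := by rw [add_smul]; abel
          simp only [hpt]
      _ = 0 := claim1 (y + a • v)
  have hrec := recover hφ₂c (hφ₂c.integrable_of_hasCompactSupport hφ₂cs) h0 0
  simpa using hrec


end Aux

/-- `T f ≡ 0` iff `div f ≡ 0`. -/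
theorem stmt1 (u v : ℝ × ℝ) (hu : u.1 ^ 2 + u.2 ^ 2 = 1) (hv : v.1 ^ 2 + v.2 ^ 2 = 1)
    (huv : LinearIndependent ℝ ![u, v])
    (f₁ f₂ : ℝ × ℝ → ℝ) (hf₁ : IsC2c f₁) (hf₂ : IsC2c f₂) :
    (∀ x, VlineT u v f₁ f₂ x = 0) ↔ (∀ x, divf f₁ f₂ x = 0) := by
  have hdne : u.1 * v.2 - u.2 * v.1 ≠ 0 := det_ne hu huv
  have hu0 : u ≠ 0 := by intro h; rw [h] at hu; simp at hu
  have hv0 : v ≠ 0 := by intro h; rw [h] at hv; simp at hv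
  have hf₁d : Differentiable ℝ f₁ := hf₁.1.differentiable (by norm_num)
  have hf₂d : Differentiable ℝ f₂ := hf₂.1.differentiable (by norm_num)
  set d : ℝ := u.1 * v.2 - u.2 * v.1 with hd_def
  set gu : ℝ × ℝ → ℝ := fun y => f₁ y * (perp2 u).1 + f₂ y * (perp2 u).2 with hgu_def
  set gv : ℝ × ℝ → ℝ := fun y => f₁ y * (perp2 v).1 + f₂ y * (perp2 v).2 with hgv_def
  have hgu1 : ContDiff ℝ 1 gu :=
    ((hf₁.1.mul contDiff_const).add (hf₂.1.mul contDiff_const)).of_le one_le_two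
  have hgv1 : ContDiff ℝ 1 gv :=
    ((hf₁.1.mul contDiff_const).add (hf₂.1.mul contDiff_const)).of_le one_le_two
  have hgu_cs : HasCompactSupport gu := (hf₁.2.mul_right).add (hf₂.2.mul_right)
  have hgv_cs : HasCompactSupport gv := (hf₁.2.mul_right).add (hf₂.2.mul_right)
  have hg_c : Continuous (divf f₁ f₂) := by
    show Continuous fun y => fderiv ℝ f₁ y (1, 0) + fderiv ℝ f₂ y (0, 1)
    exact ((hf₁.1.continuous_fderiv_apply two_ne_zero).comp
        (continuous_id.prodMk continuous_const)).add
      ((hf₂.1.continuous_fderiv_apply two_ne_zero).comp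
        (continuous_id.prodMk continuous_const))
  have hg_cs : HasCompactSupport (divf f₁ f₂) :=
    (hf₁.2.fderiv_apply ℝ ((1:ℝ), (0:ℝ))).add (hf₂.2.fderiv_apply ℝ ((0:ℝ), (1:ℝ)))
  have hkey : ∀ y, d * divf f₁ f₂ y = fderiv ℝ gu y v - fderiv ℝ gv y u := fun y =>
    keyid hf₁d hf₂d u v y
  have hA : ∀ x, VlineT u v f₁ f₂ x
      = d * ∫ s in Set.Ioi (0:ℝ), ∫ t in Set.Ioi (0:ℝ), divf f₁ f₂ (x + s • u + t • v) := by
    intro x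
    have := keyA u v hu0 hv0 d hd_def hdne gu gv (divf f₁ f₂) hgu1 hgu_cs hgv1 hgv_cs
      hg_c hg_cs hkey x
    rw [← this]
    simp only [VlineT, Xbeam, hgu_def, hgv_def]
  constructor
  · -- T f ≡ 0 → div f ≡ 0
    intro hT
    have hG : ∀ x : ℝ × ℝ,
        (∫ s in Set.Ioi (0:ℝ), ∫ t in Set.Ioi (0:ℝ), divf f₁ f₂ (x + s • u + t • v)) = 0 := by
      intro x
      have h1 := hA x
      rw [hT x] at h1
      rcases mul_eq_zero.mp h1.symm with h | h
      · exact absurd h hdne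
      · exact h
    exact recovery_all hg_c hg_cs hu0 hv0 hdne hG
  · -- div f ≡ 0 → T f ≡ 0
    intro hdiv x
    rw [hA x]
    have hz : ∀ s t : ℝ, divf f₁ f₂ (x + s • u + t • v) = 0 := fun s t => hdiv _
    simp [hz]
end
end

section
/- Let u, v be linearly independent unit vectors in ℝ² and let f = (f₁, f₂) be a vector field on ℝ² with f₁, f₂ ∈ C²_c(ℝ²). Then for every x ∈ ℝ², curl f(x) = (1/det(v,u)) · D_u D_v (L f)(x). -/
open MeasureTheory Matrix

noncomputable section

section Aux

open Set Filter Metric MeasureTheory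

/-- Along a ray with nonzero direction, a compactly supported function eventually vanishes,
uniformly for base points in a unit ball. -/
lemma vanish_far {E : Type*} [NormedAddCommGroup E] {g : ℝ × ℝ → E}
    (hs : HasCompactSupport g) {w : ℝ × ℝ} (hw : w ≠ 0) (x₀ : ℝ × ℝ) :
    ∃ T : ℝ, 0 < T ∧ ∀ x : ℝ × ℝ, ‖x - x₀‖ ≤ 1 → ∀ t : ℝ, T ≤ |t| → g (x + t • w) = 0 := by
  obtain ⟨r, hr⟩ := (Metric.isBounded_iff_subset_closedBall 0).1 hs.isBounded
  have hwpos : (0:ℝ) < ‖w‖ := norm_pos_iff.2 hw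
  set R : ℝ := max r 0 with hR
  refine ⟨(R + ‖x₀‖ + 2) / ‖w‖, by positivity, ?_⟩
  intro x hx t ht
  apply image_eq_zero_of_notMem_tsupport
  intro hmem
  have h1 : ‖x + t • w‖ ≤ R := le_max_of_le_left (by simpa using hr hmem)
  have h2 : |t| * ‖w‖ ≥ R + ‖x₀‖ + 2 := by
    have := mul_le_mul_of_nonneg_right ht (le_of_lt hwpos)
    calc R + ‖x₀‖ + 2 = (R + ‖x₀‖ + 2) / ‖w‖ * ‖w‖ := by field_simp
    _ ≤ |t| * ‖w‖ := this
  have h3 : ‖x + t • w‖ ≥ ‖t • w‖ - ‖x‖ := by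
    have h := norm_sub_norm_le (t • w) (x + t • w)
    have he : t • w - (x + t • w) = -x := by abel
    rw [he, norm_neg] at h
    linarith
  have h4 : ‖x‖ ≤ 1 + ‖x₀‖ := by
    calc ‖x‖ = ‖(x - x₀) + x₀‖ := by ring_nf
    _ ≤ ‖x - x₀‖ + ‖x₀‖ := norm_add_le _ _
    _ ≤ 1 + ‖x₀‖ := by linarith
  rw [norm_smul, Real.norm_eq_abs] at h3
  linarith

lemma hasCompactSupport_ray {E : Type*} [NormedAddCommGroup E] {g : ℝ × ℝ → E}
    (hs : HasCompactSupport g) {w : ℝ × ℝ} (hw : w ≠ 0) (x : ℝ × ℝ) :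
    HasCompactSupport (fun t : ℝ => g (x + t • w)) := by
  obtain ⟨T, hT0, hT⟩ := vanish_far hs hw x
  apply HasCompactSupport.intro (isCompact_Icc (a := -T) (b := T))
  intro t ht
  simp only [Set.mem_Icc, not_and, not_le] at ht
  refine hT x (by simp) t (le_abs.2 ?_)
  rcases le_or_gt (-T) t with h' | h'
  · left; linarith [ht h']
  · right; linarith

lemma continuous_ray (w x : ℝ × ℝ) : Continuous (fun t : ℝ => x + t • w) :=
  continuous_const.add (continuous_id.smul continuous_const)

lemma integrableOn_ray {E : Type*} [NormedAddCommGroup E] {g : ℝ × ℝ → E}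
    (hg : Continuous g) (hs : HasCompactSupport g) {w : ℝ × ℝ} (hw : w ≠ 0) (x : ℝ × ℝ) :
    MeasureTheory.IntegrableOn (fun t : ℝ => g (x + t • w)) (Set.Ioi (0:ℝ)) :=
  ((hg.comp (continuous_ray w x)).integrable_of_hasCompactSupport
    (hasCompactSupport_ray hs hw x)).integrableOn

/-- Fundamental theorem of calculus along the ray: `X_w (D_w h) = -h`. -/
lemma Xbeam_deriv_self {h : ℝ × ℝ → ℝ} (hh : ContDiff ℝ 1 h) (hs : HasCompactSupport h)
    {w : ℝ × ℝ} (hw : w ≠ 0) (x : ℝ × ℝ) :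
    Xbeam w (fun y => fderiv ℝ h y w) x = - h x := by
  have hderiv : ∀ t ∈ Set.Ici (0:ℝ),
      HasDerivAt (fun t : ℝ => h (x + t • w)) (fderiv ℝ h (x + t • w) w) t := by
    intro t _
    have h1 : HasDerivAt (fun t : ℝ => x + t • w) w t := by
      simpa using ((hasDerivAt_id t).smul_const w).const_add x
    exact (hh.differentiable one_ne_zero _).hasFDerivAt.comp_hasDerivAt t h1
  have hcontD : Continuous (fun y => fderiv ℝ h y w) :=
    ((hh.fderiv_right (m := 0) le_rfl).clm_apply contDiff_const).continuous
  have hint : MeasureTheory.IntegrableOn (fun t : ℝ => fderiv ℝ h (x + t • w) w)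
      (Set.Ioi (0:ℝ)) :=
    integrableOn_ray hcontD (hs.fderiv_apply ℝ w) hw x
  obtain ⟨T, hT0, hT⟩ := vanish_far hs hw x
  have htend : Filter.Tendsto (fun t : ℝ => h (x + t • w)) Filter.atTop (nhds 0) := by
    apply Filter.Tendsto.congr' _ tendsto_const_nhds
    filter_upwards [Filter.eventually_ge_atTop T] with t ht
    exact (hT x (by simp) t (le_abs.2 (Or.inl ht))).symm
  have := MeasureTheory.integral_Ioi_of_hasDerivAt_of_tendsto' hderiv hint htend
  simp only [zero_smul, add_zero] at this
  rw [Xbeam]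
  rw [this]
  ring

/-- Differentiation under the integral sign for the divergent beam transform. -/
lemma Xbeam_hasFDerivAt {h : ℝ × ℝ → ℝ} (hh : ContDiff ℝ 1 h) (hs : HasCompactSupport h)
    {w : ℝ × ℝ} (hw : w ≠ 0) (x₀ : ℝ × ℝ) :
    HasFDerivAt (Xbeam w h) (∫ t in Set.Ioi (0:ℝ), fderiv ℝ h (x₀ + t • w)) x₀ := by
  have hcont : Continuous h := hh.continuous
  have hcontD : Continuous (fderiv ℝ h) := (hh.fderiv_right (m := 0) le_rfl).continuous
  obtain ⟨T, hT0, hT⟩ := vanish_far (hs.fderiv ℝ) hw x₀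
  obtain ⟨C, hC⟩ := (hs.fderiv ℝ).exists_bound_of_continuous hcontD
  have hC0 : 0 ≤ C := le_trans (norm_nonneg _) (hC 0)
  apply hasFDerivAt_integral_of_dominated_of_fderiv_le
    (F' := fun x t => fderiv ℝ h (x + t • w))
    (bound := Set.indicator (Set.Icc (0:ℝ) T) (fun _ => C)) (s := Metric.ball x₀ 1) (Metric.ball_mem_nhds x₀ one_pos)
  · filter_upwards with x
    exact ((hcont.comp (continuous_ray w x)).aestronglyMeasurable)
  · exact integrableOn_ray hcont hs hw x₀
  · exact (hcontD.comp (continuous_ray w x₀)).aestronglyMeasurable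
  · filter_upwards [MeasureTheory.ae_restrict_mem measurableSet_Ioi] with t ht x hx
    rcases le_or_gt t T with h' | h'
    · have : t ∈ Set.Icc (0:ℝ) T := ⟨le_of_lt ht, h'⟩
      rw [Set.indicator_of_mem this]
      exact hC _
    · have hz : fderiv ℝ h (x + t • w) = 0 := by
        apply hT x _ t (le_abs.2 (Or.inl (le_of_lt h')))
        rw [Metric.mem_ball, dist_eq_norm] at hx
        exact le_of_lt hx
      rw [Set.indicator_of_notMem (by simp [Set.mem_Icc]; intro _; linarith)]
      simp [hz]
  · apply MeasureTheory.Integrable.restrict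
    rw [MeasureTheory.integrable_indicator_iff measurableSet_Icc]
    exact MeasureTheory.integrableOn_const measure_Icc_lt_top.ne
  · filter_upwards with t x hx
    have h1 : HasFDerivAt (fun x : ℝ × ℝ => x + t • w)
        (ContinuousLinearMap.id ℝ (ℝ × ℝ)) x := (hasFDerivAt_id x).add_const (t • w)
    have h2 := (hh.differentiable one_ne_zero (x + t • w)).hasFDerivAt
    simpa [Function.comp_def] using h2.comp x h1

lemma Xbeam_fderiv_apply {h : ℝ × ℝ → ℝ} (hh : ContDiff ℝ 1 h) (hs : HasCompactSupport h)
    {w : ℝ × ℝ} (hw : w ≠ 0) (x₀ a : ℝ × ℝ) :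
    fderiv ℝ (Xbeam w h) x₀ a = Xbeam w (fun y => fderiv ℝ h y a) x₀ := by
  rw [(Xbeam_hasFDerivAt hh hs hw x₀).fderiv]
  have hcontD : Continuous (fderiv ℝ h) := (hh.fderiv_right (m := 0) le_rfl).continuous
  rw [ContinuousLinearMap.integral_apply
    (integrableOn_ray hcontD (hs.fderiv ℝ) hw x₀) a]
  rfl

lemma differentiableAt_Xbeam {h : ℝ × ℝ → ℝ} (hh : ContDiff ℝ 1 h) (hs : HasCompactSupport h)
    {w : ℝ × ℝ} (hw : w ≠ 0) (x₀ : ℝ × ℝ) : DifferentiableAt ℝ (Xbeam w h) x₀ :=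
  (Xbeam_hasFDerivAt hh hs hw x₀).differentiableAt

end Aux

/-- `curl f = (1 / det(v,u)) · D_u D_v (L f)`. -/
theorem stmt2 (u v : ℝ × ℝ) (hu : u.1 ^ 2 + u.2 ^ 2 = 1) (hv : v.1 ^ 2 + v.2 ^ 2 = 1)
    (huv : LinearIndependent ℝ ![u, v])
    (f₁ f₂ : ℝ × ℝ → ℝ) (hf₁ : IsC2c f₁) (hf₂ : IsC2c f₂) (x : ℝ × ℝ) :
    curlf f₁ f₂ x
      = (1 / (v.1 * u.2 - u.1 * v.2)) * Ddir u (Ddir v (VlineL u v f₁ f₂)) x := by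
  classical
  obtain ⟨hf1c, hf1s⟩ := hf₁
  obtain ⟨hf2c, hf2s⟩ := hf₂
  have hu0 : u ≠ 0 := by rintro rfl; simp at hu
  have hv0 : v ≠ 0 := by rintro rfl; simp at hv
  set gu : ℝ × ℝ → ℝ := fun y => f₁ y * u.1 + f₂ y * u.2 with hgu_def
  set gv : ℝ × ℝ → ℝ := fun y => f₁ y * v.1 + f₂ y * v.2 with hgv_def
  have hgu2 : ContDiff ℝ 2 gu := (hf1c.mul contDiff_const).add (hf2c.mul contDiff_const)
  have hgv2 : ContDiff ℝ 2 gv := (hf1c.mul contDiff_const).add (hf2c.mul contDiff_const)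
  have hgu1 : ContDiff ℝ 1 gu := hgu2.of_le (by norm_num)
  have hgv1 : ContDiff ℝ 1 gv := hgv2.of_le (by norm_num)
  have hgus : HasCompactSupport gu := (hf1s.mul_right).add (hf2s.mul_right)
  have hgvs : HasCompactSupport gv := (hf1s.mul_right).add (hf2s.mul_right)
  set Dg : ℝ × ℝ → ℝ := fun y => fderiv ℝ gu y v with hDg_def
  have hDg1 : ContDiff ℝ 1 Dg :=
    (hgu2.fderiv_right (m := 1) le_rfl).clm_apply contDiff_const
  have hDgs : HasCompactSupport Dg := hgus.fderiv_apply ℝ v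
  -- Step 1: the inner directional derivative
  have key : Ddir v (VlineL u v f₁ f₂) = fun y => - Xbeam u Dg y - gv y := by
    funext y
    have h1 := Xbeam_hasFDerivAt hgu1 hgus hu0 y
    have h2 := Xbeam_hasFDerivAt hgv1 hgvs hv0 y
    have h3 : HasFDerivAt (VlineL u v f₁ f₂)
        (-(∫ t in Set.Ioi (0:ℝ), fderiv ℝ gu (y + t • u)) +
          ∫ t in Set.Ioi (0:ℝ), fderiv ℝ gv (y + t • v)) y := h1.neg.add h2
    rw [Ddir, h3.fderiv]
    simp only [ContinuousLinearMap.add_apply, ContinuousLinearMap.neg_apply]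
    have hcu : Continuous (fderiv ℝ gu) := (hgu1.fderiv_right (m := 0) le_rfl).continuous
    have hcv : Continuous (fderiv ℝ gv) := (hgv1.fderiv_right (m := 0) le_rfl).continuous
    rw [ContinuousLinearMap.integral_apply (integrableOn_ray hcu (hgus.fderiv ℝ) hu0 y) v,
      ContinuousLinearMap.integral_apply (integrableOn_ray hcv (hgvs.fderiv ℝ) hv0 y) v]
    have e1 : (∫ t in Set.Ioi (0:ℝ), fderiv ℝ gu (y + t • u) v) = Xbeam u Dg y := rfl
    have e2 : (∫ t in Set.Ioi (0:ℝ), fderiv ℝ gv (y + t • v) v) = - gv y :=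
      Xbeam_deriv_self hgv1 hgvs hv0 y
    rw [e1, e2]
    ring
  -- Step 2: the outer directional derivative
  have key2 : Ddir u (Ddir v (VlineL u v f₁ f₂)) x = fderiv ℝ gu x v - fderiv ℝ gv x u := by
    rw [Ddir, key]
    have h1 := Xbeam_hasFDerivAt hDg1 hDgs hu0 x
    have h2 := (hgv1.differentiable one_ne_zero x).hasFDerivAt
    have h3 : HasFDerivAt (fun y => - Xbeam u Dg y - gv y)
        (-(∫ t in Set.Ioi (0:ℝ), fderiv ℝ Dg (x + t • u)) - fderiv ℝ gv x) x :=
      h1.neg.sub h2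
    rw [h3.fderiv]
    simp only [ContinuousLinearMap.sub_apply, ContinuousLinearMap.neg_apply]
    have hcD : Continuous (fderiv ℝ Dg) := (hDg1.fderiv_right (m := 0) le_rfl).continuous
    rw [ContinuousLinearMap.integral_apply (integrableOn_ray hcD (hDgs.fderiv ℝ) hu0 x) u]
    have e1 : (∫ t in Set.Ioi (0:ℝ), fderiv ℝ Dg (x + t • u) u) = - Dg x :=
      Xbeam_deriv_self hDg1 hDgs hu0 x
    rw [e1]
    simp only [hDg_def]
    ring
  -- derivative of gu, gv
  have hgu_d : ∀ a : ℝ × ℝ, fderiv ℝ gu x a = fderiv ℝ f₁ x a * u.1 + fderiv ℝ f₂ x a * u.2 := by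
    intro a
    have h1 : HasFDerivAt gu (u.1 • fderiv ℝ f₁ x + u.2 • fderiv ℝ f₂ x) x :=
      ((hf1c.differentiable two_ne_zero x).hasFDerivAt.mul_const u.1).add
        ((hf2c.differentiable two_ne_zero x).hasFDerivAt.mul_const u.2)
    rw [h1.fderiv]
    simp [mul_comm]
  have hgv_d : ∀ a : ℝ × ℝ, fderiv ℝ gv x a = fderiv ℝ f₁ x a * v.1 + fderiv ℝ f₂ x a * v.2 := by
    intro a
    have h1 : HasFDerivAt gv (v.1 • fderiv ℝ f₁ x + v.2 • fderiv ℝ f₂ x) x :=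
      ((hf1c.differentiable two_ne_zero x).hasFDerivAt.mul_const v.1).add
        ((hf2c.differentiable two_ne_zero x).hasFDerivAt.mul_const v.2)
    rw [h1.fderiv]
    simp [mul_comm]
  have hdecomp : ∀ (φ : ℝ × ℝ →L[ℝ] ℝ) (a : ℝ × ℝ),
      φ a = a.1 * φ (1, 0) + a.2 * φ (0, 1) := by
    intro φ a
    have ha : a = a.1 • ((1:ℝ), (0:ℝ)) + a.2 • ((0:ℝ), (1:ℝ)) := by
      simp [Prod.ext_iff]
    conv_lhs => rw [ha]
    rw [map_add, φ.map_smul, φ.map_smul, smul_eq_mul, smul_eq_mul]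
  have hdet : v.1 * u.2 - u.1 * v.2 ≠ 0 := by
    intro hd
    rw [LinearIndependent.pair_iff] at huv
    have e1 : v.1 • u + (-u.1) • v = 0 := by
      apply Prod.ext <;> simp [Prod.ext_iff] <;> nlinarith [hd]
    have e2 : v.2 • u + (-u.2) • v = 0 := by
      apply Prod.ext <;> simp [Prod.ext_iff] <;> nlinarith [hd]
    have h1 := huv _ _ e1
    have h2 := huv _ _ e2
    have hu1 : u.1 = 0 := by have := h1.2; linarith [neg_eq_zero.1 this]
    have hu2 : u.2 = 0 := by have := h2.2; linarith [neg_eq_zero.1 this]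
    rw [hu1, hu2] at hu
    norm_num at hu
  rw [key2, hgu_d, hgv_d, hdecomp (fderiv ℝ f₁ x) u, hdecomp (fderiv ℝ f₁ x) v,
    hdecomp (fderiv ℝ f₂ x) u, hdecomp (fderiv ℝ f₂ x) v, curlf]
  field_simp
  ring
end
end

section
/- Let u, v be linearly independent unit vectors in ℝ² and let f = (f₁, f₂) be a vector field on ℝ² with f₁, f₂ ∈ C²_c(ℝ²). Then for every x ∈ ℝ², div f(x) = -(1/det(v,u)) · D_u D_v (T f)(x). -/
open MeasureTheory Matrix

noncomputable section

section AuxStmt3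

open Set

/-- Compact support of the restriction of a compactly supported function to a line. -/
lemma line_hcs {E : Type*} [NormedAddCommGroup E] {h : ℝ × ℝ → E}
    (hs : HasCompactSupport h) {u : ℝ × ℝ} (hu : u ≠ 0) (x : ℝ × ℝ) :
    HasCompactSupport (fun t : ℝ => h (x + t • u)) := by
  obtain ⟨R, hR⟩ := hs.isBounded.subset_closedBall (0 : ℝ × ℝ)
  have hu' : 0 < ‖u‖ := norm_pos_iff.2 hu
  apply HasCompactSupport.intro (isCompact_Icc (a := -((R + ‖x‖)/‖u‖)) (b := (R + ‖x‖)/‖u‖))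
  intro t ht
  by_contra hne
  have hmem : x + t • u ∈ tsupport h := subset_tsupport _ hne
  have h1 : ‖x + t • u‖ ≤ R := by simpa using hR hmem
  have h2 : ‖t • u‖ ≤ R + ‖x‖ := by
    calc ‖t • u‖ = ‖(x + t • u) + (-x)‖ := by ring_nf
      _ ≤ ‖x + t • u‖ + ‖x‖ := by simpa using norm_add_le (x + t • u) (-x)
      _ ≤ R + ‖x‖ := by linarith
  have h3 : |t| ≤ (R + ‖x‖)/‖u‖ := by
    rw [norm_smul, Real.norm_eq_abs] at h2
    rw [le_div_iff₀ hu']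
    exact h2
  exact ht ⟨neg_le_of_abs_le h3, le_of_abs_le h3⟩

lemma line_integrable {h : ℝ × ℝ → ℝ} (hc : Continuous h)
    (hs : HasCompactSupport h) {u : ℝ × ℝ} (hu : u ≠ 0) (x : ℝ × ℝ) :
    Integrable (fun t : ℝ => h (x + t • u)) (volume.restrict (Set.Ioi (0:ℝ))) :=
  ((hc.comp (by continuity)).integrable_of_hasCompactSupport (line_hcs hs hu x)).restrict

lemma line_integrable_clm {h : ℝ × ℝ → (ℝ × ℝ) →L[ℝ] ℝ} (hc : Continuous h)
    (hs : HasCompactSupport h) {u : ℝ × ℝ} (hu : u ≠ 0) (x : ℝ × ℝ) :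
    Integrable (fun t : ℝ => h (x + t • u)) (volume.restrict (Set.Ioi (0:ℝ))) :=
  ((hc.comp (by continuity)).integrable_of_hasCompactSupport (line_hcs hs hu x)).restrict

set_option maxHeartbeats 1000000 in
/-- Differentiation under the integral sign for the divergent beam transform. -/
lemma hasFDerivAt_Xbeam {h : ℝ × ℝ → ℝ} (hd : ContDiff ℝ 1 h) (hs : HasCompactSupport h)
    {u : ℝ × ℝ} (hu : u ≠ 0) (x : ℝ × ℝ) :
    HasFDerivAt (Xbeam u h)
      (∫ t in Set.Ioi (0:ℝ), fderiv ℝ h (x + t • u)) x := by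
  have hu' : 0 < ‖u‖ := norm_pos_iff.2 hu
  have hfd_cont : Continuous (fderiv ℝ h) := hd.continuous_fderiv one_ne_zero
  have hfd_cs : HasCompactSupport (fderiv ℝ h) := hs.fderiv ℝ
  obtain ⟨C, hC⟩ := (continuous_norm.comp hfd_cont).bounded_above_of_compact_support hfd_cs.norm
  obtain ⟨M, hM⟩ := hfd_cs.isBounded.subset_closedBall (0 : ℝ × ℝ)
  set R : ℝ := (M + ‖x‖ + 1)/‖u‖ with hR
  have key : ∀ x' ∈ Metric.ball x 1, ∀ t : ℝ, t ∉ Set.Icc (-R) R →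
      fderiv ℝ h (x' + t • u) = 0 := by
    intro x' hx' t ht
    by_contra hne
    have hmem : x' + t • u ∈ tsupport (fderiv ℝ h) := subset_tsupport _ hne
    have h1 : ‖x' + t • u‖ ≤ M := by simpa using hM hmem
    have hx'' : ‖x'‖ ≤ ‖x‖ + 1 := by
      have := mem_ball_iff_norm.1 hx'
      calc ‖x'‖ = ‖x + (x' - x)‖ := by ring_nf
        _ ≤ ‖x‖ + ‖x' - x‖ := norm_add_le _ _
        _ ≤ ‖x‖ + 1 := by linarith
    have h2 : ‖t • u‖ ≤ M + ‖x‖ + 1 := by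
      calc ‖t • u‖ = ‖(x' + t • u) + (-x')‖ := by ring_nf
        _ ≤ ‖x' + t • u‖ + ‖x'‖ := by simpa using norm_add_le (x' + t • u) (-x')
        _ ≤ M + ‖x‖ + 1 := by linarith
    have h3 : |t| ≤ R := by
      rw [norm_smul, Real.norm_eq_abs] at h2
      rw [hR, le_div_iff₀ hu']
      exact h2
    exact ht ⟨neg_le_of_abs_le h3, le_of_abs_le h3⟩
  set bound : ℝ → ℝ := Set.indicator (Set.Icc (-R) R) (fun _ => C) with hbd
  have hline : ∀ x' : ℝ × ℝ, Continuous (fun t : ℝ => x' + t • u) := fun x' =>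
    continuous_const.add (continuous_id.smul continuous_const)
  have hmeas : ∀ x' : ℝ × ℝ, AEStronglyMeasurable (fun t : ℝ => h (x' + t • u))
      (volume.restrict (Set.Ioi (0:ℝ))) := fun x' =>
    (hd.continuous.comp (hline x')).aestronglyMeasurable
  have hmeas' : AEStronglyMeasurable (fun t : ℝ => fderiv ℝ h (x + t • u))
      (volume.restrict (Set.Ioi (0:ℝ))) := (hfd_cont.comp (hline x)).aestronglyMeasurable
  have hbound : ∀ t : ℝ, ∀ x' ∈ Metric.ball x 1, ‖fderiv ℝ h (x' + t • u)‖ ≤ bound t := by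
    intro t x' hx'
    by_cases ht : t ∈ Set.Icc (-R) R
    · rw [hbd, Set.indicator_of_mem ht]
      simpa using hC (x' + t • u)
    · rw [key x' hx' t ht, hbd, Set.indicator_of_notMem ht]
      simp
  have hbint : Integrable bound (volume.restrict (Set.Ioi (0:ℝ))) :=
    ((integrableOn_const measure_Icc_lt_top.ne).integrable_indicator
      measurableSet_Icc).restrict
  have hdiff : ∀ t : ℝ, ∀ x' ∈ Metric.ball x 1,
      HasFDerivAt (fun y : ℝ × ℝ => h (y + t • u)) (fderiv ℝ h (x' + t • u)) x' := by
    intro t x' _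
    have h1 : HasFDerivAt h (fderiv ℝ h (x' + t • u)) (x' + t • u) :=
      (hd.differentiable one_ne_zero _).hasFDerivAt
    have h2 : HasFDerivAt (fun y : ℝ × ℝ => y + t • u) (ContinuousLinearMap.id ℝ (ℝ × ℝ)) x' :=
      (hasFDerivAt_id x').add_const (t • u)
    simpa [Function.comp_def] using h1.comp x' h2
  exact hasFDerivAt_integral_of_dominated_of_fderiv_le (Metric.ball_mem_nhds x one_pos)
    (Filter.Eventually.of_forall hmeas) (line_integrable hd.continuous hs hu x) hmeas'
    (Filter.Eventually.of_forall hbound) hbint (Filter.Eventually.of_forall hdiff)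

/-- FTC along the beam: `X_u (D_u k) = -k`. -/
lemma Xbeam_fderiv_self {k : ℝ × ℝ → ℝ} (hd : ContDiff ℝ 1 k) (hs : HasCompactSupport k)
    {u : ℝ × ℝ} (hu : u ≠ 0) (x : ℝ × ℝ) :
    Xbeam u (fun y => fderiv ℝ k y u) x = - k x := by
  have hderiv : ∀ t ∈ Set.Ici (0:ℝ), HasDerivAt (fun t : ℝ => k (x + t • u))
      (fderiv ℝ k (x + t • u) u) t := by
    intro t _
    have h1 : HasFDerivAt k (fderiv ℝ k (x + t • u)) (x + t • u) :=
      (hd.differentiable one_ne_zero _).hasFDerivAt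
    have h2 : HasDerivAt (fun s : ℝ => x + s • u) u t := by
      simpa using ((hasDerivAt_id t).smul_const u).const_add x
    exact h1.comp_hasDerivAt t h2
  have hint : MeasureTheory.IntegrableOn (fun t : ℝ => fderiv ℝ k (x + t • u) u)
      (Set.Ioi 0) := by
    have hc : Continuous (fun y => fderiv ℝ k y u) :=
      (ContinuousLinearMap.apply ℝ ℝ u).continuous.comp (hd.continuous_fderiv one_ne_zero)
    exact line_integrable hc (hs.fderiv_apply ℝ u) hu x
  have htend : Filter.Tendsto (fun t : ℝ => k (x + t • u)) Filter.atTop (nhds 0) := by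
    obtain ⟨R, hR⟩ := (line_hcs hs hu x).isBounded.subset_closedBall (0:ℝ)
    have : ∀ᶠ t : ℝ in Filter.atTop, k (x + t • u) = 0 := by
      filter_upwards [Filter.eventually_gt_atTop R] with t ht
      by_contra hne
      have := hR (subset_tsupport (fun t : ℝ => k (x + t • u)) hne)
      simp only [Metric.mem_closedBall, Real.dist_eq, sub_zero] at this
      have : t ≤ R := le_of_abs_le this
      linarith
    exact tendsto_const_nhds.congr' (this.mono fun t ht => ht.symm)
  have := MeasureTheory.integral_Ioi_of_hasDerivAt_of_tendsto' hderiv hint htend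
  simpa [Xbeam] using this

/-- C¹ smoothness of a directional derivative of a C² function. -/
lemma contDiff_dderiv {g : ℝ × ℝ → ℝ} (hg : ContDiff ℝ 2 g) (w : ℝ × ℝ) :
    ContDiff ℝ 1 (fun y => fderiv ℝ g y w) :=
  (ContinuousLinearMap.apply ℝ ℝ w).contDiff.comp (hg.fderiv_right (m := 1) (by norm_num))

/-- Key step: directional derivative of a V-line transform. -/
lemma ddir_step {h₁ h₂ : ℝ × ℝ → ℝ} (hd₁ : ContDiff ℝ 1 h₁) (hs₁ : HasCompactSupport h₁)
    (hd₂ : ContDiff ℝ 1 h₂) (hs₂ : HasCompactSupport h₂)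
    {u v : ℝ × ℝ} (hu : u ≠ 0) (hv : v ≠ 0) (w : ℝ × ℝ) :
    Ddir w (fun x => - Xbeam u h₁ x + Xbeam v h₂ x)
      = fun x => - Xbeam u (fun y => fderiv ℝ h₁ y w) x
          + Xbeam v (fun y => fderiv ℝ h₂ y w) x := by
  funext z
  have H1 := hasFDerivAt_Xbeam hd₁ hs₁ hu z
  have H2 := hasFDerivAt_Xbeam hd₂ hs₂ hv z
  have H := H1.neg.add H2
  rw [Ddir, show (fun x => - Xbeam u h₁ x + Xbeam v h₂ x) = -Xbeam u h₁ + Xbeam v h₂ from rfl,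
    H.fderiv]
  simp only [ContinuousLinearMap.add_apply, ContinuousLinearMap.neg_apply]
  rw [ContinuousLinearMap.integral_apply
      (line_integrable_clm (hd₁.continuous_fderiv one_ne_zero) (hs₁.fderiv ℝ) hu z) w,
    ContinuousLinearMap.integral_apply
      (line_integrable_clm (hd₂.continuous_fderiv one_ne_zero) (hs₂.fderiv ℝ) hv z) w]
  rfl

/-- Schwarz symmetry of second directional derivatives. -/
lemma schwarz {g : ℝ × ℝ → ℝ} (hg : ContDiff ℝ 2 g) (x w₁ w₂ : ℝ × ℝ) :
    fderiv ℝ (fun y => fderiv ℝ g y w₁) x w₂ = fderiv ℝ (fun y => fderiv ℝ g y w₂) x w₁ := by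
  have hdiff : ∀ y, HasFDerivAt g (fderiv ℝ g y) y := fun y =>
    (hg.differentiable two_ne_zero y).hasFDerivAt
  have h2 : HasFDerivAt (fderiv ℝ g) (fderiv ℝ (fderiv ℝ g) x) x :=
    (((hg.fderiv_right (m := 1) (by norm_num)).differentiable one_ne_zero) x).hasFDerivAt
  have e : ∀ w : ℝ × ℝ, fderiv ℝ (fun y => fderiv ℝ g y w) x
      = (ContinuousLinearMap.apply ℝ ℝ w).comp (fderiv ℝ (fderiv ℝ g) x) := by
    intro w
    exact (((ContinuousLinearMap.apply ℝ ℝ w).hasFDerivAt).comp x h2).fderiv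
  rw [e w₁, e w₂]
  exact second_derivative_symmetric hdiff h2 w₂ w₁

lemma det_ne_aux {u v : ℝ × ℝ} (hu : u.1 ^ 2 + u.2 ^ 2 = 1)
    (huv : LinearIndependent ℝ ![u, v]) : v.1 * u.2 - u.1 * v.2 ≠ 0 := by
  intro hd
  rw [LinearIndependent.pair_iff] at huv
  have e1 := huv v.1 (-u.1) (by
    rw [Prod.ext_iff]
    constructor <;> simp <;> ring_nf
    · linarith)
  have e2 := huv v.2 (-u.2) (by
    rw [Prod.ext_iff]
    constructor <;> simp <;> ring_nf
    · linarith)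
  have hu1 : u.1 = 0 := by linarith [e1.2]
  have hu2 : u.2 = 0 := by linarith [e2.2]
  rw [hu1, hu2] at hu
  norm_num at hu

end AuxStmt3

/-- `div f = -(1 / det(v,u)) · D_u D_v (T f)`. -/
theorem stmt3 (u v : ℝ × ℝ) (hu : u.1 ^ 2 + u.2 ^ 2 = 1) (hv : v.1 ^ 2 + v.2 ^ 2 = 1)
    (huv : LinearIndependent ℝ ![u, v])
    (f₁ f₂ : ℝ × ℝ → ℝ) (hf₁ : IsC2c f₁) (hf₂ : IsC2c f₂) (x : ℝ × ℝ) :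
    divf f₁ f₂ x
      = -(1 / (v.1 * u.2 - u.1 * v.2)) * Ddir u (Ddir v (VlineT u v f₁ f₂)) x := by
  have hu0 : u ≠ 0 := by
    intro h; rw [h] at hu; norm_num at hu
  have hv0 : v ≠ 0 := by
    intro h; rw [h] at hv; norm_num at hv
  have hdet := det_ne_aux hu huv
  set gU : ℝ × ℝ → ℝ := fun y => f₁ y * (perp2 u).1 + f₂ y * (perp2 u).2 with hgUdef
  set gV : ℝ × ℝ → ℝ := fun y => f₁ y * (perp2 v).1 + f₂ y * (perp2 v).2 with hgVdef
  have hgUc : ContDiff ℝ 2 gU := (hf₁.1.mul contDiff_const).add (hf₂.1.mul contDiff_const)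
  have hgVc : ContDiff ℝ 2 gV := (hf₁.1.mul contDiff_const).add (hf₂.1.mul contDiff_const)
  have hgUs : HasCompactSupport gU := (hf₁.2.mul_right).add (hf₂.2.mul_right)
  have hgVs : HasCompactSupport gV := (hf₁.2.mul_right).add (hf₂.2.mul_right)
  have h1 : Ddir v (VlineT u v f₁ f₂)
      = fun z => - Xbeam u (fun y => fderiv ℝ gU y v) z
          + Xbeam v (fun y => fderiv ℝ gV y v) z :=
    ddir_step (hgUc.of_le one_le_two) hgUs (hgVc.of_le one_le_two) hgVs hu0 hv0 v
  have key : Ddir u (Ddir v (VlineT u v f₁ f₂)) x = fderiv ℝ gU x v - fderiv ℝ gV x u := by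
    rw [h1]
    have h2 := congrFun (ddir_step (contDiff_dderiv hgUc v) (hgUs.fderiv_apply ℝ v)
      (contDiff_dderiv hgVc v) (hgVs.fderiv_apply ℝ v) hu0 hv0 u) x
    rw [h2, Xbeam_fderiv_self (contDiff_dderiv hgUc v) (hgUs.fderiv_apply ℝ v) hu0 x]
    have hsw : (fun y => fderiv ℝ (fun y' => fderiv ℝ gV y' v) y u)
        = fun y => fderiv ℝ (fun y' => fderiv ℝ gV y' u) y v :=
      funext fun y => schwarz hgVc y v u
    rw [hsw, Xbeam_fderiv_self (contDiff_dderiv hgVc u) (hgVs.fderiv_apply ℝ u) hv0 x]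
    ring
  rw [key]
  have hfd1 : DifferentiableAt ℝ f₁ x := (hf₁.1.differentiable two_ne_zero) x
  have hfd2 : DifferentiableAt ℝ f₂ x := (hf₂.1.differentiable two_ne_zero) x
  have combo : ∀ (a b : ℝ) (w : ℝ × ℝ), fderiv ℝ (fun y => f₁ y * a + f₂ y * b) x w
      = fderiv ℝ f₁ x w * a + fderiv ℝ f₂ x w * b := by
    intro a b w
    rw [fderiv_fun_add (hfd1.mul_const a) (hfd2.mul_const b), fderiv_mul_const hfd1,
      fderiv_mul_const hfd2]
    simp [smul_eq_mul]
    ring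
  have dec : ∀ (g : ℝ × ℝ → ℝ) (w : ℝ × ℝ), fderiv ℝ g x w
      = w.1 * fderiv ℝ g x (1, 0) + w.2 * fderiv ℝ g x (0, 1) := by
    intro g w
    have hw : w = w.1 • ((1:ℝ), (0:ℝ)) + w.2 • ((0:ℝ), (1:ℝ)) := by
      rw [Prod.ext_iff]; constructor <;> simp
    conv_lhs => rw [hw]
    rw [map_add, ContinuousLinearMap.map_smul, ContinuousLinearMap.map_smul]
    simp [smul_eq_mul]
  rw [hgUdef, hgVdef, combo, combo, dec f₁ v, dec f₂ v, dec f₁ u, dec f₂ u]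
  simp only [divf, perp2]
  field_simp
  ring
end
end

section
/- Let u, v be linearly independent unit vectors in ℝ² and let f = (f₁, f₂) be a vector field on ℝ² with f₁, f₂ ∈ C²_c(ℝ²) such that div f(x) = 0 for all x ∈ ℝ². If L f(x) = 0 for all x ∈ ℝ², then f = 0 identically. That is, the longitudinal V-line transform is injective on compactly supported divergence-free vector fields. -/
open MeasureTheory Matrix

noncomputable section

section AuxVline

open Set

lemma aux_hcs_line {g : ℝ × ℝ → ℝ} (hg : HasCompactSupport g) {w : ℝ × ℝ} (hw : w ≠ 0)
    (x : ℝ × ℝ) : HasCompactSupport (fun t : ℝ => g (x + t • w)) := by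
  obtain ⟨R, hR⟩ := hg.isCompact.isBounded.exists_norm_le
  apply HasCompactSupport.intro (isCompact_Icc (a := -((R + ‖x‖)/‖w‖)) (b := (R + ‖x‖)/‖w‖))
  intro t ht
  apply image_eq_zero_of_notMem_tsupport
  intro hmem
  have h1 : ‖x + t • w‖ ≤ R := hR _ hmem
  have h2 : ‖t • w‖ ≤ ‖x + t • w‖ + ‖x‖ := by
    calc ‖t • w‖ = ‖(x + t • w) - x‖ := by congr 1; abel
      _ ≤ ‖x + t • w‖ + ‖x‖ := norm_sub_le _ _
  rw [norm_smul, Real.norm_eq_abs] at h2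
  have hwpos : 0 < ‖w‖ := norm_pos_iff.mpr hw
  have h3 : |t| ≤ (R + ‖x‖)/‖w‖ := by rw [le_div_iff₀ hwpos]; nlinarith
  rw [abs_le] at h3
  simp only [Set.mem_Icc, not_and_or, not_le] at ht
  rcases ht with h | h <;> linarith [h3.1, h3.2]

lemma aux_Ioi_shift {h : ℝ → ℝ} (hc : Continuous h) (hint : Integrable h) (s : ℝ) :
    ∫ t in Ioi (0:ℝ), h (t + s) = (∫ t in Ioi (0:ℝ), h t) - ∫ t in (0:ℝ)..s, h t := by
  have e1 : ∫ t in Ioi (0:ℝ), h (t + s) = ∫ t in Ioi s, h t := by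
    have := (measurableEmbedding_addRight s).setIntegral_map (μ := volume) h (Ioi s)
    rw [MeasureTheory.map_add_right_eq_self volume s] at this
    rw [this]
    have hpre : (fun x => x + s) ⁻¹' Ioi s = Ioi 0 := by ext t; simp
    rw [hpre]
  rw [e1]
  have e2 : ∀ a : ℝ, (∫ t in Iic a, h t) + ∫ t in Ioi a, h t = ∫ t, h t := by
    intro a
    rw [← integral_add_compl (measurableSet_Iic (a := a)) hint, compl_Iic]
  have e3 := intervalIntegral.integral_Iic_sub_Iic (hint.integrableOn (s := Iic (0:ℝ))) (hint.integrableOn (s := Iic s))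
  have := e2 0; have := e2 s
  linarith [e2 0, e2 s, e3]

lemma aux_Xbeam_shift {g : ℝ × ℝ → ℝ} (hgc : Continuous g) (hgs : HasCompactSupport g)
    {w : ℝ × ℝ} (hw : w ≠ 0) (x : ℝ × ℝ) (s : ℝ) :
    Xbeam w g (x + s • w) = Xbeam w g x - ∫ t in (0:ℝ)..s, g (x + t • w) := by
  have hc : Continuous fun t : ℝ => g (x + t • w) := by fun_prop
  have hcs : HasCompactSupport (fun t : ℝ => g (x + t • w)) := aux_hcs_line hgs hw x
  have hint : Integrable (fun t : ℝ => g (x + t • w)) := hc.integrable_of_hasCompactSupport hcs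
  have e0 : ∀ t : ℝ, x + s • w + t • w = x + (t + s) • w := by
    intro t; rw [add_smul]; abel
  calc Xbeam w g (x + s • w) = ∫ t in Ioi (0:ℝ), g (x + (t + s) • w) := by
        unfold Xbeam; congr 1; ext t; rw [e0]
    _ = (∫ t in Ioi (0:ℝ), g (x + t • w)) - ∫ t in (0:ℝ)..s, g (x + t • w) :=
        aux_Ioi_shift hc hint s
    _ = Xbeam w g x - ∫ t in (0:ℝ)..s, g (x + t • w) := rfl


lemma aux_line_deriv {g : ℝ × ℝ → ℝ} (hg : Differentiable ℝ g) (a w : ℝ × ℝ) (r₀ : ℝ) :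
    HasDerivAt (fun r : ℝ => g (a + r • w)) (fderiv ℝ g (a + r₀ • w) w) r₀ := by
  have hline : HasDerivAt (fun r : ℝ => a + r • w) w r₀ := by
    simpa using (hasDerivAt_id r₀).smul_const w
  exact (hg (a + r₀ • w)).hasFDerivAt.comp_hasDerivAt r₀ hline

lemma aux_loop {g₁ g₂ : ℝ × ℝ → ℝ}
    (hc₁ : Continuous g₁) (hs₁ : HasCompactSupport g₁)
    (hc₂ : Continuous g₂) (hs₂ : HasCompactSupport g₂)
    {u v : ℝ × ℝ} (hu : u ≠ 0) (hv : v ≠ 0)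
    (hφ : ∀ x, Xbeam u g₁ x = Xbeam v g₂ x) (x : ℝ × ℝ) (s r : ℝ) :
    ∫ t in (0:ℝ)..r, (g₂ ((x + t • v) + s • u) - g₂ (x + t • v)) =
      ∫ t in (0:ℝ)..s, (g₁ ((x + t • u) + r • v) - g₁ (x + t • u)) := by
  have e1 : ∀ y : ℝ × ℝ, ∀ s : ℝ, Xbeam u g₁ (y + s • u)
      = Xbeam u g₁ y - ∫ t in (0:ℝ)..s, g₁ (y + t • u) :=
    fun y s => aux_Xbeam_shift hc₁ hs₁ hu y s
  have e2 : ∀ y : ℝ × ℝ, ∀ r : ℝ, Xbeam u g₁ (y + r • v)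
      = Xbeam u g₁ y - ∫ t in (0:ℝ)..r, g₂ (y + t • v) := by
    intro y r
    rw [hφ, hφ]; exact aux_Xbeam_shift hc₂ hs₂ hv y r
  have key1 : Xbeam u g₁ (x + s • u + r • v)
      = Xbeam u g₁ x - (∫ t in (0:ℝ)..s, g₁ (x + t • u))
        - ∫ t in (0:ℝ)..r, g₂ ((x + s • u) + t • v) := by
    rw [e2 (x + s • u) r, e1 x s]
  have key2 : Xbeam u g₁ (x + s • u + r • v)
      = Xbeam u g₁ x - (∫ t in (0:ℝ)..r, g₂ (x + t • v))
        - ∫ t in (0:ℝ)..s, g₁ ((x + r • v) + t • u) := by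
    have hrw : x + s • u + r • v = (x + r • v) + s • u := by abel
    rw [hrw, e1 (x + r • v) s, e2 x r]
  have hint : ∀ (g : ℝ × ℝ → ℝ), Continuous g → ∀ (y w : ℝ × ℝ) (b : ℝ),
      IntervalIntegrable (fun t => g (y + t • w)) volume 0 b := by
    intro g hg y w b
    exact (by fun_prop : Continuous fun t : ℝ => g (y + t • w)).intervalIntegrable 0 b
  rw [intervalIntegral.integral_sub
        ((by fun_prop : Continuous fun t : ℝ => g₂ (x + t • v + s • u)).intervalIntegrable 0 r)
        ((by fun_prop : Continuous fun t : ℝ => g₂ (x + t • v)).intervalIntegrable 0 r),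
      intervalIntegral.integral_sub
        ((by fun_prop : Continuous fun t : ℝ => g₁ (x + t • u + r • v)).intervalIntegrable 0 s)
        ((by fun_prop : Continuous fun t : ℝ => g₁ (x + t • u)).intervalIntegrable 0 s)]
  have c1 : (∫ t in (0:ℝ)..r, g₂ (x + t • v + s • u)) = ∫ t in (0:ℝ)..r, g₂ (x + s • u + t • v) := by
    apply intervalIntegral.integral_congr; intro t _; congr 1; abel
  have c2 : (∫ t in (0:ℝ)..s, g₁ (x + t • u + r • v)) = ∫ t in (0:ℝ)..s, g₁ (x + r • v + t • u) := by
    apply intervalIntegral.integral_congr; intro t _; congr 1; abel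
  rw [c1, c2]
  linarith [key1, key2]

lemma aux_cross {g₁ g₂ : ℝ × ℝ → ℝ}
    (hd₁ : ContDiff ℝ 2 g₁) (hs₁ : HasCompactSupport g₁)
    (hd₂ : ContDiff ℝ 2 g₂) (hs₂ : HasCompactSupport g₂)
    {u v : ℝ × ℝ} (hu : u ≠ 0) (hv : v ≠ 0)
    (hφ : ∀ x, Xbeam u g₁ x = Xbeam v g₂ x) (x : ℝ × ℝ) :
    fderiv ℝ g₂ x u = fderiv ℝ g₁ x v := by
  have hdiff₁ : Differentiable ℝ g₁ := hd₁.differentiable (by norm_num)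
  have hdiff₂ : Differentiable ℝ g₂ := hd₂.differentiable (by norm_num)
  have hc₁ : Continuous g₁ := hd₁.continuous
  have hc₂ : Continuous g₂ := hd₂.continuous
  have hfc₁ : Continuous (fderiv ℝ g₁) := (hd₁.of_le (m := 1) (by norm_num)).continuous_fderiv one_ne_zero
  have hfc₂ : Continuous (fderiv ℝ g₂) := (hd₂.of_le (m := 1) (by norm_num)).continuous_fderiv one_ne_zero
  obtain ⟨C, hC⟩ : ∃ C, ∀ y, ‖fderiv ℝ g₁ y‖ ≤ C :=
    hfc₁.bounded_above_of_compact_support (hs₁.fderiv ℝ)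
  -- step 1: the identity (★)
  have star : ∀ s : ℝ, g₂ (x + s • u) - g₂ x
      = ∫ t in (0:ℝ)..s, fderiv ℝ g₁ (x + t • u) v := by
    intro s
    have hAB : ∀ r : ℝ,
        (∫ t in (0:ℝ)..r, (g₂ ((x + t • v) + s • u) - g₂ (x + t • v)))
          = ∫ t in (0:ℝ)..s, (g₁ ((x + t • u) + r • v) - g₁ (x + t • u)) :=
      fun r => aux_loop hc₁ hs₁ hc₂ hs₂ hu hv hφ x s r
    have hA : HasDerivAt
        (fun r : ℝ => ∫ t in (0:ℝ)..r, (g₂ ((x + t • v) + s • u) - g₂ (x + t • v)))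
        (g₂ (x + s • u) - g₂ x) 0 := by
      have hcont : Continuous fun t : ℝ => g₂ ((x + t • v) + s • u) - g₂ (x + t • v) := by
        fun_prop
      have := intervalIntegral.integral_hasDerivAt_right
        (hcont.intervalIntegrable 0 0)
        (hcont.stronglyMeasurableAtFilter volume (nhds 0)) hcont.continuousAt
      simpa using this
    have hB : HasDerivAt
        (fun r : ℝ => ∫ t in (0:ℝ)..s, (g₁ ((x + t • u) + r • v) - g₁ (x + t • u)))
        (∫ t in (0:ℝ)..s, fderiv ℝ g₁ (x + t • u) v) 0 := by
      have key := intervalIntegral.hasDerivAt_integral_of_dominated_loc_of_deriv_le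
        (F := fun (r : ℝ) (t : ℝ) => g₁ ((x + t • u) + r • v) - g₁ (x + t • u))
        (F' := fun (r : ℝ) (t : ℝ) => fderiv ℝ g₁ ((x + t • u) + r • v) v)
        (x₀ := 0) (a := 0) (b := s) (μ := volume) (bound := fun _ => C * ‖v‖)
        (s := Metric.ball 0 1) (Metric.ball_mem_nhds 0 one_pos)
        (Filter.Eventually.of_forall fun r =>
          ((by fun_prop : Continuous fun t : ℝ =>
            g₁ ((x + t • u) + r • v) - g₁ (x + t • u))).aestronglyMeasurable.restrict)
        ((by fun_prop : Continuous fun t : ℝ =>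
            g₁ ((x + t • u) + (0:ℝ) • v) - g₁ (x + t • u)).intervalIntegrable 0 s)
        (((hfc₁.comp (by fun_prop : Continuous fun t : ℝ => (x + t • u) + (0:ℝ) • v)).clm_apply
            continuous_const).aestronglyMeasurable.restrict)
        (Filter.Eventually.of_forall fun t _ r _ => by
          calc ‖fderiv ℝ g₁ ((x + t • u) + r • v) v‖
              ≤ ‖fderiv ℝ g₁ ((x + t • u) + r • v)‖ * ‖v‖ :=
                ContinuousLinearMap.le_opNorm _ _
            _ ≤ C * ‖v‖ := by
                have := hC ((x + t • u) + r • v)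
                have : (0:ℝ) ≤ ‖v‖ := norm_nonneg v
                nlinarith [hC ((x + t • u) + r • v), norm_nonneg v,
                  norm_nonneg (fderiv ℝ g₁ ((x + t • u) + r • v))])
        (intervalIntegrable_const)
        (Filter.Eventually.of_forall fun t _ r _ => by
          simpa using (aux_line_deriv hdiff₁ (x + t • u) v r).sub_const (g₁ (x + t • u)))
      simpa using key.2
    have hfun : (fun r : ℝ => ∫ t in (0:ℝ)..r, (g₂ ((x + t • v) + s • u) - g₂ (x + t • v)))
        = fun r : ℝ => ∫ t in (0:ℝ)..s, (g₁ ((x + t • u) + r • v) - g₁ (x + t • u)) :=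
      funext hAB
    rw [hfun] at hA
    exact hA.unique hB
  -- step 2: differentiate (★) at s = 0
  have hL : HasDerivAt (fun s : ℝ => g₂ (x + s • u) - g₂ x) (fderiv ℝ g₂ x u) 0 := by
    have := (aux_line_deriv hdiff₂ x u 0).sub_const (g₂ x)
    simpa using this
  have hcontβ : Continuous fun t : ℝ => fderiv ℝ g₁ (x + t • u) v :=
    (hfc₁.comp (by fun_prop : Continuous fun t : ℝ => x + t • u)).clm_apply continuous_const
  have hR : HasDerivAt (fun s : ℝ => ∫ t in (0:ℝ)..s, fderiv ℝ g₁ (x + t • u) v)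
      (fderiv ℝ g₁ x v) 0 := by
    have := intervalIntegral.integral_hasDerivAt_right
      (hcontβ.intervalIntegrable 0 0)
      (hcontβ.stronglyMeasurableAtFilter volume (nhds 0)) hcontβ.continuousAt
    simpa using this
  have hfun : (fun s : ℝ => g₂ (x + s • u) - g₂ x)
      = fun s : ℝ => ∫ t in (0:ℝ)..s, fderiv ℝ g₁ (x + t • u) v := funext star
  rw [hfun] at hL
  exact hL.unique hR

lemma aux_fderiv_apply {f : ℝ × ℝ → ℝ} (hf : Differentiable ℝ f) (x w : ℝ × ℝ) :
    fderiv ℝ f x w = w.1 * fderiv ℝ f x (1, 0) + w.2 * fderiv ℝ f x (0, 1) := by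
  have hw : w = w.1 • ((1:ℝ), (0:ℝ)) + w.2 • ((0:ℝ), (1:ℝ)) := by
    simp [Prod.ext_iff]
  conv_lhs => rw [hw]
  rw [map_add, (fderiv ℝ f x).map_smul, (fderiv ℝ f x).map_smul]
  simp [smul_eq_mul]

lemma aux_fderiv_g {f₁ f₂ : ℝ × ℝ → ℝ} (hf₁ : Differentiable ℝ f₁)
    (hf₂ : Differentiable ℝ f₂) (c x w : ℝ × ℝ) :
    fderiv ℝ (fun y => f₁ y * c.1 + f₂ y * c.2) x w
      = fderiv ℝ f₁ x w * c.1 + fderiv ℝ f₂ x w * c.2 := by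
  have h : HasFDerivAt (fun y => f₁ y * c.1 + f₂ y * c.2)
      (c.1 • fderiv ℝ f₁ x + c.2 • fderiv ℝ f₂ x) x := by
    have := (((hf₁ x).hasFDerivAt.mul_const c.1).add ((hf₂ x).hasFDerivAt.mul_const c.2))
    exact this
  rw [h.fderiv]
  simp [smul_eq_mul]
  ring

lemma aux_det_ne_zero {u v : ℝ × ℝ} (hu : u.1 ^ 2 + u.2 ^ 2 = 1) (hv : v.1 ^ 2 + v.2 ^ 2 = 1)
    (huv : LinearIndependent ℝ ![u, v]) : u.1 * v.2 - u.2 * v.1 ≠ 0 := by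
  intro hdet
  rw [linearIndependent_fin2] at huv
  obtain ⟨hv0, hav⟩ := huv
  simp only [Matrix.cons_val_one, Matrix.head_cons, Matrix.cons_val_zero] at hv0 hav
  by_cases h1 : v.1 = 0
  · have hv2 : v.2 ≠ 0 := by
      intro h2; apply hv0; ext <;> simp [h1, h2]
    have hu1 : u.1 = 0 := by
      have : u.1 * v.2 = 0 := by rw [h1] at hdet; linarith
      rcases mul_eq_zero.mp this with h | h
      · exact h
      · exact absurd h hv2
    exact hav (u.2 / v.2) (by ext <;> simp [h1, hu1] <;> field_simp)
  · exact hav (u.1 / v.1) (by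
      ext
      · simp; field_simp
      · simp only [Prod.smul_snd, smul_eq_mul]
        field_simp; linarith)

open Complex in
lemma aux_holo_zero {f₁ f₂ : ℝ × ℝ → ℝ}
    (hd₁ : ContDiff ℝ 2 f₁) (hs₁ : HasCompactSupport f₁)
    (hd₂ : ContDiff ℝ 2 f₂) (hs₂ : HasCompactSupport f₂)
    (hdiv : ∀ x, fderiv ℝ f₁ x (1, 0) + fderiv ℝ f₂ x (0, 1) = 0)
    (hcurl : ∀ x, fderiv ℝ f₂ x (1, 0) = fderiv ℝ f₁ x (0, 1)) :
    ∀ x, f₁ x = 0 ∧ f₂ x = 0 := by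
  have hdiff₁ : Differentiable ℝ f₁ := hd₁.differentiable (by norm_num)
  have hdiff₂ : Differentiable ℝ f₂ := hd₂.differentiable (by norm_num)
  set q : ℝ × ℝ →L[ℝ] ℂ :=
    Complex.ofRealCLM.comp (ContinuousLinearMap.fst ℝ ℝ ℝ)
      - (ContinuousLinearMap.snd ℝ ℝ ℝ).smulRight Complex.I with hq
  have hq_apply : ∀ ab : ℝ × ℝ, q ab = (ab.1 : ℂ) - (ab.2 : ℂ) * Complex.I := by
    intro ab
    simp [hq, Complex.real_smul]
  set e : ℂ →L[ℝ] ℝ × ℝ := Complex.equivRealProdCLM.toContinuousLinearMap with he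
  have he_apply : ∀ z : ℂ, e z = (z.re, z.im) := fun z => rfl
  set F : ℂ → ℂ := fun z => q (f₁ (e z), f₂ (e z)) with hF
  have hFderiv : ∀ z : ℂ, HasDerivAt F
      ((fderiv ℝ f₁ (e z) (1, 0) : ℂ) - (fderiv ℝ f₂ (e z) (1, 0) : ℂ) * Complex.I) z := by
    intro z
    set p := e z with hp
    set L : ℂ →L[ℝ] ℂ :=
      (q.comp ((fderiv ℝ f₁ p).prod (fderiv ℝ f₂ p))).comp e with hL
    have hFd : HasFDerivAt F L z := by
      have hprod : HasFDerivAt (fun y : ℝ × ℝ => (f₁ y, f₂ y))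
          ((fderiv ℝ f₁ p).prod (fderiv ℝ f₂ p)) p :=
        (hdiff₁ p).hasFDerivAt.prodMk (hdiff₂ p).hasFDerivAt
      have hG : HasFDerivAt (fun y : ℝ × ℝ => q (f₁ y, f₂ y))
          (q.comp ((fderiv ℝ f₁ p).prod (fderiv ℝ f₂ p))) p :=
        q.hasFDerivAt.comp p hprod
      exact HasFDerivAt.comp (g := fun y : ℝ × ℝ => q (f₁ y, f₂ y)) z hG e.hasFDerivAt
    set c : ℂ := (fderiv ℝ f₁ p (1, 0) : ℂ) - (fderiv ℝ f₂ p (1, 0) : ℂ) * Complex.I with hc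
    have hLw : ∀ w : ℂ, L w = w * c := by
      intro w
      have h1 : L w = q (fderiv ℝ f₁ p (w.re, w.im), fderiv ℝ f₂ p (w.re, w.im)) := rfl
      rw [h1, hq_apply, aux_fderiv_apply hdiff₁, aux_fderiv_apply hdiff₂]
      have ha2 : fderiv ℝ f₁ p (0, 1) = fderiv ℝ f₂ p (1, 0) := (hcurl p).symm
      have hb2 : fderiv ℝ f₂ p (0, 1) = -fderiv ℝ f₁ p (1, 0) := by linarith [hdiv p]
      rw [ha2, hb2, hc]
      apply Complex.ext <;> simp <;> ring
    rw [hasDerivAt_iff_isLittleO]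
    have hlo := hFd.isLittleO
    have : ∀ x' : ℂ, F x' - F z - L (x' - z) = F x' - F z - (x' - z) • c := by
      intro x'; rw [hLw, smul_eq_mul]
    simpa only [this] using hlo
  have hFdiff' : Differentiable ℂ F := fun z => (hFderiv z).differentiableAt
  have hFcont : Continuous F := by
    apply q.continuous.comp
    exact ((hd₁.continuous.comp e.continuous).prodMk (hd₂.continuous.comp e.continuous))
  have hpaircs : HasCompactSupport (fun y : ℝ × ℝ => (f₁ y, f₂ y)) := by
    apply HasCompactSupport.intro (hs₁.isCompact.union hs₂.isCompact)
    intro y hy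
    simp only [Set.mem_union, not_or] at hy
    have h1 : f₁ y = 0 := image_eq_zero_of_notMem_tsupport hy.1
    have h2 : f₂ y = 0 := image_eq_zero_of_notMem_tsupport hy.2
    simp [h1, h2, Prod.ext_iff]
  have hGcs : HasCompactSupport (fun y : ℝ × ℝ => q (f₁ y, f₂ y)) :=
    hpaircs.comp_left (map_zero q)
  have hFcs : HasCompactSupport F :=
    hGcs.comp_homeomorph Complex.equivRealProdCLM.toHomeomorph
  obtain ⟨C, hC⟩ := hFcont.bounded_above_of_compact_support hFcs
  have hbdd : Bornology.IsBounded (Set.range F) := by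
    rw [isBounded_iff_forall_norm_le]
    exact ⟨C, by rintro _ ⟨z, rfl⟩; exact hC z⟩
  obtain ⟨z₀, hz₀⟩ := Set.ne_univ_iff_exists_notMem _ |>.mp (hFcs.isCompact.ne_univ)
  have hz₀0 : F z₀ = 0 := image_eq_zero_of_notMem_tsupport hz₀
  have hFzero : ∀ z, F z = 0 := fun z =>
    (hFdiff'.apply_eq_apply_of_bounded hbdd z z₀).trans hz₀0
  intro x
  have hx := hFzero (Complex.equivRealProdCLM.symm x)
  have hex : e (Complex.equivRealProdCLM.symm x) = x := Complex.equivRealProdCLM.apply_symm_apply x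
  have hx2 : q (f₁ x, f₂ x) = 0 := by
    rw [← hex]; exact hx
  rw [hq_apply] at hx2
  rw [Complex.ext_iff] at hx2
  simp at hx2
  exact hx2

end AuxVline

/-- `L` is injective on compactly supported divergence-free fields. -/
theorem stmt4 (u v : ℝ × ℝ) (hu : u.1 ^ 2 + u.2 ^ 2 = 1) (hv : v.1 ^ 2 + v.2 ^ 2 = 1)
    (huv : LinearIndependent ℝ ![u, v])
    (f₁ f₂ : ℝ × ℝ → ℝ) (hf₁ : IsC2c f₁) (hf₂ : IsC2c f₂)
    (hdiv : ∀ x, divf f₁ f₂ x = 0)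
    (hL : ∀ x, VlineL u v f₁ f₂ x = 0) :
    ∀ x, f₁ x = 0 ∧ f₂ x = 0 := by
  obtain ⟨hd₁, hs₁⟩ := hf₁
  obtain ⟨hd₂, hs₂⟩ := hf₂
  have hdiff₁ : Differentiable ℝ f₁ := hd₁.differentiable (by norm_num)
  have hdiff₂ : Differentiable ℝ f₂ := hd₂.differentiable (by norm_num)
  have hu0 : u ≠ 0 := by
    intro h; rw [h] at hu; norm_num at hu
  have hv0 : v ≠ 0 := by
    intro h; rw [h] at hv; norm_num at hv
  have hgud : ContDiff ℝ 2 (fun y => f₁ y * u.1 + f₂ y * u.2) :=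
    (hd₁.mul contDiff_const).add (hd₂.mul contDiff_const)
  have hgus : HasCompactSupport (fun y => f₁ y * u.1 + f₂ y * u.2) :=
    (hs₁.mul_right).add (hs₂.mul_right)
  have hgvd : ContDiff ℝ 2 (fun y => f₁ y * v.1 + f₂ y * v.2) :=
    (hd₁.mul contDiff_const).add (hd₂.mul contDiff_const)
  have hgvs : HasCompactSupport (fun y => f₁ y * v.1 + f₂ y * v.2) :=
    (hs₁.mul_right).add (hs₂.mul_right)
  have hφ : ∀ x, Xbeam u (fun y => f₁ y * u.1 + f₂ y * u.2) x
      = Xbeam v (fun y => f₁ y * v.1 + f₂ y * v.2) x := by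
    intro x
    have := hL x
    unfold VlineL at this
    linarith
  have hcross := aux_cross hgud hgus hgvd hgvs hu0 hv0 hφ
  have hdet := aux_det_ne_zero hu hv huv
  have hcurl : ∀ x, fderiv ℝ f₂ x (1, 0) = fderiv ℝ f₁ x (0, 1) := by
    intro x
    have h := hcross x
    rw [aux_fderiv_g hdiff₁ hdiff₂ v x u, aux_fderiv_g hdiff₁ hdiff₂ u x v] at h
    rw [aux_fderiv_apply hdiff₁ x u, aux_fderiv_apply hdiff₂ x u,
      aux_fderiv_apply hdiff₁ x v, aux_fderiv_apply hdiff₂ x v] at h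
    have key : (u.1 * v.2 - u.2 * v.1) * (fderiv ℝ f₂ x (1, 0) - fderiv ℝ f₁ x (0, 1)) = 0 := by
      linear_combination h
    rcases mul_eq_zero.mp key with h0 | h0
    · exact absurd h0 hdet
    · linarith
  have hdiv' : ∀ x, fderiv ℝ f₁ x (1, 0) + fderiv ℝ f₂ x (0, 1) = 0 := by
    intro x
    have := hdiv x
    unfold divf at this
    exact this
  exact aux_holo_zero hd₁ hs₁ hd₂ hs₂ hdiv' hcurl
end
end

section
/- Let γ₁, …, γ_m be distinct unit vectors in ℝ² and c₁, …, c_m nonzero real weights, and let f = (f₁, f₂) be a vector field on ℝ² with f₁, f₂ ∈ C²_c(ℝ²). If there exists a unit vector ψ ∈ ℝ² with ψ·γᵢ ≠ 0 for all i = 1,…,m and γ(ψ) ≠ 0, and S f(x) = 0 for all x ∈ ℝ², then f = 0 identically. -/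
open MeasureTheory Matrix

noncomputable section

lemma dot2_add_smul (x : ℝ × ℝ) (t : ℝ) (u ψ : ℝ × ℝ) :
    dot2 (x + t • u) ψ = dot2 x ψ + t * dot2 ψ u := by
  simp [dot2, Prod.fst_add, Prod.snd_add, Prod.smul_fst, Prod.smul_snd]; ring

lemma dot2_abs_le (y z : ℝ × ℝ) : |dot2 y z| ≤ ‖y‖ * (|z.1| + |z.2|) := by
  have h1 : |y.1| ≤ ‖y‖ := by simpa using (norm_fst_le y)
  have h2 : |y.2| ≤ ‖y‖ := by simpa using (norm_snd_le y)
  have : |dot2 y z| ≤ |y.1| * |z.1| + |y.2| * |z.2| := by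
    simpa [abs_mul, dot2] using abs_add_le (y.1 * z.1) (y.2 * z.2)
  have hn : 0 ≤ ‖y‖ := norm_nonneg y
  nlinarith [abs_nonneg z.1, abs_nonneg z.2, abs_nonneg y.1, abs_nonneg y.2]

lemma ftc_piece (φ : ℝ → ℝ) (hφ : ContDiff ℝ 1 φ) (hφs : HasCompactSupport φ)
    (w a : ℝ) (ha : a ≠ 0) :
    ∫ t in Set.Ioi (0:ℝ), deriv φ (w - t * a) = φ w / a := by
  set e : ℝ ≃ₜ ℝ := (Homeomorph.mulRight₀ a ha).trans
    ((Homeomorph.neg ℝ).trans (Homeomorph.addLeft w))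
  have he : ∀ t, e t = w - t * a := by
    intro t
    simp [e, Homeomorph.coe_mulRight₀, sub_eq_add_neg]
  set F : ℝ → ℝ := fun t => φ (w - t * a) with hF
  have hFe : F = φ ∘ e := by
    funext t; simp [F, he t]
  have hFs : HasCompactSupport F := by
    rw [hFe]; exact hφs.comp_homeomorph e
  have hFc : ContDiff ℝ 1 F := by
    apply hφ.comp
    exact contDiff_const.sub (contDiff_id.mul contDiff_const)
  have key : ∀ t : ℝ, HasDerivAt F (deriv φ (w - t * a) * (-a)) t := by
    intro t
    have h1 : HasDerivAt (fun t : ℝ => w - t * a) (-a) t := by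
      simpa using ((hasDerivAt_id t).mul_const a).const_sub w
    exact ((hφ.differentiable (by norm_num) (w - t * a)).hasDerivAt).comp t h1
  have hder : deriv F = fun t => deriv φ (w - t * a) * (-a) := by
    funext t; exact (key t).deriv
  have h2 : ∫ t in Set.Ioi (0:ℝ), deriv F t = - F 0 :=
    hFs.integral_Ioi_deriv_eq hFc 0
  rw [hder] at h2
  have h3 : ∀ t : ℝ, deriv φ (w - t * a) = (deriv φ (w - t * a) * (-a)) / (-a) := by
    intro t; field_simp
  calc ∫ t in Set.Ioi (0:ℝ), deriv φ (w - t * a)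
      = ∫ t in Set.Ioi (0:ℝ), (deriv φ (w - t * a) * (-a)) / (-a) := by
        exact integral_congr_ae (Filter.Eventually.of_forall fun t => h3 t)
    _ = (∫ t in Set.Ioi (0:ℝ), deriv φ (w - t * a) * (-a)) / (-a) := integral_div _ _
    _ = (- F 0) / (-a) := by rw [h2]
    _ = φ w / a := by simp [F]

lemma continuous_dot2 (ψ : ℝ × ℝ) : Continuous fun x : ℝ × ℝ => dot2 x ψ := by
  unfold dot2; fun_prop

lemma prod_int1 (u ψ : ℝ × ℝ) (ha : dot2 ψ u ≠ 0)
    (g : ℝ × ℝ → ℝ) (hg : Continuous g) (hgs : HasCompactSupport g)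
    (ρ : ℝ → ℝ) (hρ : Continuous ρ) (hρs : HasCompactSupport ρ) :
    Integrable (Function.uncurry fun (x : ℝ × ℝ) (t : ℝ) => g (x + t • u) * ρ (dot2 x ψ))
      ((volume : Measure (ℝ × ℝ)).prod (volume.restrict (Set.Ioi (0:ℝ)))) := by
  set a := dot2 ψ u
  obtain ⟨R, hR⟩ := hgs.isCompact.isBounded.subset_closedBall 0
  obtain ⟨S, hS⟩ := hρs.isCompact.isBounded.subset_closedBall 0
  set B := R * (|ψ.1| + |ψ.2|) with hB
  set T := (B + S) / |a| with hT
  set R' := R + T * ‖u‖ + 1 with hR'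
  have hcont : Continuous (Function.uncurry
      fun (x : ℝ × ℝ) (t : ℝ) => g (x + t • u) * ρ (dot2 x ψ)) := by
    apply Continuous.mul
    · exact hg.comp (continuous_fst.add (continuous_snd.smul continuous_const))
    · exact hρ.comp ((continuous_dot2 ψ).comp continuous_fst)
  have hsupp : HasCompactSupport (Function.uncurry
      fun (x : ℝ × ℝ) (t : ℝ) => g (x + t • u) * ρ (dot2 x ψ)) := by
    apply HasCompactSupport.intro
      ((isCompact_closedBall (0 : ℝ × ℝ) R').prod (isCompact_Icc (a := -T) (b := T)))
    rintro ⟨x, t⟩ hp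
    by_contra hne
    have hgx : g (x + t • u) ≠ 0 := fun h => hne (by simp [Function.uncurry, h])
    have hρx : ρ (dot2 x ψ) ≠ 0 := fun h => hne (by simp [Function.uncurry, h])
    have h1 : ‖x + t • u‖ ≤ R := by
      have := hR (subset_tsupport g hgx)
      simpa [Metric.mem_closedBall] using this
    have h2 : |dot2 x ψ| ≤ S := by
      have := hS (subset_tsupport ρ hρx)
      simpa [Metric.mem_closedBall, Real.dist_eq] using this
    have h3 : |dot2 (x + t • u) ψ| ≤ B := by
      refine le_trans (dot2_abs_le _ _) ?_
      rw [hB]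
      have := abs_nonneg ψ.1
      have := abs_nonneg ψ.2
      nlinarith
    have h4 : |t * a| ≤ B + S := by
      have heq : t * a = dot2 (x + t • u) ψ - dot2 x ψ := by
        rw [dot2_add_smul]; ring
      rw [heq]
      calc |dot2 (x + t • u) ψ - dot2 x ψ| ≤ |dot2 (x + t • u) ψ| + |dot2 x ψ| :=
            abs_sub _ _
        _ ≤ B + S := add_le_add h3 h2
    have h5 : |t| ≤ T := by
      rw [hT, le_div_iff₀ (abs_pos.2 ha)]
      calc |t| * |a| = |t * a| := (abs_mul t a).symm
        _ ≤ B + S := h4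
    have h6 : ‖x‖ ≤ R' := by
      calc ‖x‖ = ‖(x + t • u) - t • u‖ := by ring_nf
        _ ≤ ‖x + t • u‖ + ‖t • u‖ := norm_sub_le _ _
        _ ≤ R + |t| * ‖u‖ := by
            refine add_le_add h1 ?_
            rw [norm_smul, Real.norm_eq_abs]
        _ ≤ R + T * ‖u‖ := by nlinarith [norm_nonneg u, abs_nonneg t, h5]
        _ ≤ R' := by rw [hR']; linarith
    exact hp ⟨by simpa [Metric.mem_closedBall] using h6, by
      simpa [Set.mem_Icc] using abs_le.1 h5⟩
  have hint : Integrable (Function.uncurry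
      fun (x : ℝ × ℝ) (t : ℝ) => g (x + t • u) * ρ (dot2 x ψ))
      ((volume : Measure (ℝ × ℝ)).prod (volume : Measure ℝ)) := by
    rw [← MeasureTheory.Measure.volume_eq_prod]
    exact hcont.integrable_of_hasCompactSupport hsupp
  have : (volume : Measure (ℝ × ℝ)).prod (volume.restrict (Set.Ioi (0:ℝ)))
      = (((volume : Measure (ℝ × ℝ)).prod (volume : Measure ℝ)).restrict
          (Set.univ ×ˢ Set.Ioi (0:ℝ))) := by
    rw [← Measure.prod_restrict, Measure.restrict_univ]
  rw [this]
  exact hint.restrict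

lemma prod_int2 (a : ℝ) (ha : a ≠ 0) (ψ : ℝ × ℝ)
    (g : ℝ × ℝ → ℝ) (hg : Continuous g) (hgs : HasCompactSupport g)
    (ρ : ℝ → ℝ) (hρ : Continuous ρ) (hρs : HasCompactSupport ρ) :
    Integrable (Function.uncurry fun (t : ℝ) (y : ℝ × ℝ) => g y * ρ (dot2 y ψ - t * a))
      ((volume.restrict (Set.Ioi (0:ℝ))).prod (volume : Measure (ℝ × ℝ))) := by
  obtain ⟨R, hR⟩ := hgs.isCompact.isBounded.subset_closedBall 0
  obtain ⟨S, hS⟩ := hρs.isCompact.isBounded.subset_closedBall 0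
  set B := R * (|ψ.1| + |ψ.2|) with hB
  set T := (B + S) / |a| with hT
  have hcont : Continuous (Function.uncurry
      fun (t : ℝ) (y : ℝ × ℝ) => g y * ρ (dot2 y ψ - t * a)) := by
    apply Continuous.mul
    · exact hg.comp continuous_snd
    · exact hρ.comp (((continuous_dot2 ψ).comp continuous_snd).sub
        (continuous_fst.mul continuous_const))
  have hsupp : HasCompactSupport (Function.uncurry
      fun (t : ℝ) (y : ℝ × ℝ) => g y * ρ (dot2 y ψ - t * a)) := by
    apply HasCompactSupport.intro
      ((isCompact_Icc (a := -T) (b := T)).prod (isCompact_closedBall (0 : ℝ × ℝ) R))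
    rintro ⟨t, y⟩ hp
    by_contra hne
    have hgy : g y ≠ 0 := fun h => hne (by simp [Function.uncurry, h])
    have hρy : ρ (dot2 y ψ - t * a) ≠ 0 := fun h => hne (by simp [Function.uncurry, h])
    have h1 : ‖y‖ ≤ R := by
      have := hR (subset_tsupport g hgy)
      simpa [Metric.mem_closedBall] using this
    have h2 : |dot2 y ψ - t * a| ≤ S := by
      have := hS (subset_tsupport ρ hρy)
      simpa [Metric.mem_closedBall, Real.dist_eq] using this
    have h3 : |dot2 y ψ| ≤ B := by
      refine le_trans (dot2_abs_le _ _) ?_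
      rw [hB]
      have := abs_nonneg ψ.1
      have := abs_nonneg ψ.2
      nlinarith
    have h4 : |t * a| ≤ B + S := by
      calc |t * a| = |dot2 y ψ - (dot2 y ψ - t * a)| := by ring_nf
        _ ≤ |dot2 y ψ| + |dot2 y ψ - t * a| := abs_sub _ _
        _ ≤ B + S := add_le_add h3 h2
    have h5 : |t| ≤ T := by
      rw [hT, le_div_iff₀ (abs_pos.2 ha)]
      calc |t| * |a| = |t * a| := (abs_mul t a).symm
        _ ≤ B + S := h4
    exact hp ⟨by simpa [Set.mem_Icc] using abs_le.1 h5,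
      by simpa [Metric.mem_closedBall] using h1⟩
  have hint : Integrable (Function.uncurry
      fun (t : ℝ) (y : ℝ × ℝ) => g y * ρ (dot2 y ψ - t * a))
      ((volume : Measure ℝ).prod (volume : Measure (ℝ × ℝ))) := by
    rw [← MeasureTheory.Measure.volume_eq_prod]
    exact hcont.integrable_of_hasCompactSupport hsupp
  have : (volume.restrict (Set.Ioi (0:ℝ))).prod (volume : Measure (ℝ × ℝ))
      = (((volume : Measure ℝ).prod (volume : Measure (ℝ × ℝ))).restrict
          (Set.Ioi (0:ℝ) ×ˢ Set.univ)) := by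
    rw [← Measure.prod_restrict, Measure.restrict_univ]
  rw [this]
  exact hint.restrict

lemma integrable_piece (u ψ : ℝ × ℝ) (ha : dot2 ψ u ≠ 0)
    (g : ℝ × ℝ → ℝ) (hg : Continuous g) (hgs : HasCompactSupport g)
    (φ : ℝ → ℝ) (hφ : ContDiff ℝ 1 φ) (hφs : HasCompactSupport φ) :
    Integrable (fun x : ℝ × ℝ => Xbeam u g x * deriv φ (dot2 x ψ)) := by
  have h1 := (prod_int1 u ψ ha g hg hgs (deriv φ) (hφ.continuous_deriv le_rfl)
    hφs.deriv).integral_prod_left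
  refine h1.congr (Filter.Eventually.of_forall fun x => ?_)
  show (∫ t in Set.Ioi (0:ℝ), g (x + t • u) * deriv φ (dot2 x ψ)) = _
  rw [integral_mul_const]
  rfl

lemma key_identity (u ψ : ℝ × ℝ) (ha : dot2 ψ u ≠ 0)
    (g : ℝ × ℝ → ℝ) (hg : Continuous g) (hgs : HasCompactSupport g)
    (φ : ℝ → ℝ) (hφ : ContDiff ℝ 1 φ) (hφs : HasCompactSupport φ) :
    ∫ x : ℝ × ℝ, Xbeam u g x * deriv φ (dot2 x ψ)
      = (1 / dot2 ψ u) * ∫ y : ℝ × ℝ, g y * φ (dot2 y ψ) := by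
  set a := dot2 ψ u with haa
  have hρc : Continuous (deriv φ) := hφ.continuous_deriv le_rfl
  have hρs : HasCompactSupport (deriv φ) := hφs.deriv
  have step1 : ∀ x : ℝ × ℝ, Xbeam u g x * deriv φ (dot2 x ψ)
      = ∫ t in Set.Ioi (0:ℝ), g (x + t • u) * deriv φ (dot2 x ψ) := by
    intro x; rw [integral_mul_const]; rfl
  have step3 : ∀ t : ℝ, (∫ x : ℝ × ℝ, g (x + t • u) * deriv φ (dot2 x ψ))
      = ∫ y : ℝ × ℝ, g y * deriv φ (dot2 y ψ - t * a) := by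
    intro t
    have h := MeasureTheory.integral_add_right_eq_self (μ := (volume : Measure (ℝ × ℝ)))
      (fun y : ℝ × ℝ => g y * deriv φ (dot2 y ψ - t * a)) (t • u)
    rw [← h]
    congr 1; funext x
    rw [dot2_add_smul, haa]; ring_nf
  have step5 : ∀ y : ℝ × ℝ, (∫ t in Set.Ioi (0:ℝ), g y * deriv φ (dot2 y ψ - t * a))
      = (1 / a) * (g y * φ (dot2 y ψ)) := by
    intro y
    rw [MeasureTheory.integral_const_mul, ftc_piece φ hφ hφs _ a ha]
    field_simp
  calc ∫ x : ℝ × ℝ, Xbeam u g x * deriv φ (dot2 x ψ)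
      = ∫ x : ℝ × ℝ, ∫ t in Set.Ioi (0:ℝ), g (x + t • u) * deriv φ (dot2 x ψ) := by
        exact integral_congr_ae (Filter.Eventually.of_forall step1)
    _ = ∫ t in Set.Ioi (0:ℝ), ∫ x : ℝ × ℝ, g (x + t • u) * deriv φ (dot2 x ψ) :=
        integral_integral_swap (prod_int1 u ψ ha g hg hgs (deriv φ) hρc hρs)
    _ = ∫ t in Set.Ioi (0:ℝ), ∫ y : ℝ × ℝ, g y * deriv φ (dot2 y ψ - t * a) :=
        integral_congr_ae (Filter.Eventually.of_forall step3)
    _ = ∫ y : ℝ × ℝ, ∫ t in Set.Ioi (0:ℝ), g y * deriv φ (dot2 y ψ - t * a) :=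
        integral_integral_swap (prod_int2 a ha ψ g hg hgs (deriv φ) hρc hρs)
    _ = ∫ y : ℝ × ℝ, (1 / a) * (g y * φ (dot2 y ψ)) :=
        integral_congr_ae (Filter.Eventually.of_forall step5)
    _ = (1 / a) * ∫ y : ℝ × ℝ, g y * φ (dot2 y ψ) := integral_const_mul _ _

lemma ridge_vanish (m : ℕ) (γ : Fin m → ℝ × ℝ) (c : Fin m → ℝ)
    (f₁ f₂ : ℝ × ℝ → ℝ) (hf₁c : Continuous f₁) (hf₁s : HasCompactSupport f₁)
    (hf₂c : Continuous f₂) (hf₂s : HasCompactSupport f₂)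
    (hS : ∀ x, starS m γ c f₁ f₂ x = 0)
    (ψ : ℝ × ℝ) (hd : ∀ i, dot2 ψ (γ i) ≠ 0) (hv : starGamma m γ c ψ ≠ 0)
    (φ : ℝ → ℝ) (hφ : ContDiff ℝ 1 φ) (hφs : HasCompactSupport φ) :
    (∫ y : ℝ × ℝ, f₁ y * φ (dot2 y ψ)) = 0 ∧ (∫ y : ℝ × ℝ, f₂ y * φ (dot2 y ψ)) = 0 := by
  set J₁ := ∫ y : ℝ × ℝ, f₁ y * φ (dot2 y ψ) with hJ₁
  set J₂ := ∫ y : ℝ × ℝ, f₂ y * φ (dot2 y ψ) with hJ₂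
  have hφc : Continuous φ := hφ.continuous
  have hint1 : Integrable (fun y : ℝ × ℝ => f₁ y * φ (dot2 y ψ)) :=
    Continuous.integrable_of_hasCompactSupport
      (hf₁c.mul (hφc.comp (by unfold dot2; fun_prop)))
      (hf₁s.mul_right)
  have hint2 : Integrable (fun y : ℝ × ℝ => f₂ y * φ (dot2 y ψ)) :=
    Continuous.integrable_of_hasCompactSupport
      (hf₂c.mul (hφc.comp (by unfold dot2; fun_prop)))
      (hf₂s.mul_right)
  -- ridge integral of a combination
  have claimA : ∀ A B : ℝ,
      (∫ y : ℝ × ℝ, (f₁ y * A + f₂ y * B) * φ (dot2 y ψ)) = A * J₁ + B * J₂ := by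
    intro A B
    have : (fun y : ℝ × ℝ => (f₁ y * A + f₂ y * B) * φ (dot2 y ψ))
        = fun y => A * (f₁ y * φ (dot2 y ψ)) + B * (f₂ y * φ (dot2 y ψ)) := by
      funext y; ring
    rw [this, integral_add (hint1.const_mul A) (hint2.const_mul B),
      MeasureTheory.integral_const_mul, MeasureTheory.integral_const_mul]
  -- continuity and compact support of combinations
  have hgc : ∀ A B : ℝ, Continuous (fun y : ℝ × ℝ => f₁ y * A + f₂ y * B) := by
    intro A B; fun_prop
  have hgs : ∀ A B : ℝ, HasCompactSupport (fun y : ℝ × ℝ => f₁ y * A + f₂ y * B) := by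
    intro A B; exact (hf₁s.mul_right).add (hf₂s.mul_right)
  -- the two sum identities
  have main : ∀ G : Fin m → ℝ × ℝ, (∀ x, ∑ i, c i *
        Xbeam (γ i) (fun y => f₁ y * (G i).1 + f₂ y * (G i).2) x = 0) →
      ∑ i, (c i / dot2 ψ (γ i)) * ((G i).1 * J₁ + (G i).2 * J₂) = 0 := by
    intro G hzero
    have hzint : (∫ x : ℝ × ℝ, ∑ i, c i *
        (Xbeam (γ i) (fun y => f₁ y * (G i).1 + f₂ y * (G i).2) x
          * deriv φ (dot2 x ψ))) = 0 := by
      have he : ∀ x : ℝ × ℝ, ∑ i, c i *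
          (Xbeam (γ i) (fun y => f₁ y * (G i).1 + f₂ y * (G i).2) x
            * deriv φ (dot2 x ψ)) = 0 := by
        intro x
        have : ∑ i, c i *
            (Xbeam (γ i) (fun y => f₁ y * (G i).1 + f₂ y * (G i).2) x
              * deriv φ (dot2 x ψ))
            = (∑ i, c i * Xbeam (γ i) (fun y => f₁ y * (G i).1 + f₂ y * (G i).2) x)
              * deriv φ (dot2 x ψ) := by
          rw [Finset.sum_mul]; exact Finset.sum_congr rfl fun i _ => by ring
        rw [this, hzero x, zero_mul]
      simp only [he, integral_zero]
    rw [integral_finset_sum _ (fun i _ => (integrable_piece (γ i) ψ (hd i) _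
      (hgc _ _) (hgs _ _) φ hφ hφs).const_mul (c i))] at hzint
    have : ∀ i : Fin m, (∫ x : ℝ × ℝ, c i *
        (Xbeam (γ i) (fun y => f₁ y * (G i).1 + f₂ y * (G i).2) x
          * deriv φ (dot2 x ψ)))
        = (c i / dot2 ψ (γ i)) * ((G i).1 * J₁ + (G i).2 * J₂) := by
      intro i
      rw [MeasureTheory.integral_const_mul, key_identity (γ i) ψ (hd i) _ (hgc _ _) (hgs _ _) φ hφ hφs,
        claimA]
      field_simp
    rw [Finset.sum_congr rfl fun i _ => this i] at hzint
    exact hzint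
  -- apply to the two components of starS
  set S₁ := ∑ i, (c i / dot2 ψ (γ i)) * (γ i).1 with hS₁
  set S₂ := ∑ i, (c i / dot2 ψ (γ i)) * (γ i).2 with hS₂
  have h0 : ∀ x, (∑ i, c i *
      Xbeam (γ i) (fun y => f₁ y * (γ i).1 + f₂ y * (γ i).2) x = 0) ∧
      (∑ i, c i *
      Xbeam (γ i) (fun y => f₁ y * (perp2 (γ i)).1 + f₂ y * (perp2 (γ i)).2) x = 0) := by
    intro x
    have h := hS x
    unfold starS at h
    rw [Prod.ext_iff] at h
    obtain ⟨h1, h2⟩ := h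
    rw [Prod.fst_sum] at h1
    rw [Prod.snd_sum] at h2
    constructor
    · simpa [smul_eq_mul] using h1
    · simpa [smul_eq_mul] using h2
  have hsplit : ∀ p q : Fin m → ℝ,
      (∑ i, (c i / dot2 ψ (γ i)) * (p i * J₁ + q i * J₂))
        = (∑ i, (c i / dot2 ψ (γ i)) * p i) * J₁
          + (∑ i, (c i / dot2 ψ (γ i)) * q i) * J₂ := by
    intro p q
    rw [Finset.sum_mul, Finset.sum_mul, ← Finset.sum_add_distrib]
    exact Finset.sum_congr rfl fun i _ => by ring
  have E1 := main γ (fun x => (h0 x).1)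
  have E2 := main (fun i => perp2 (γ i)) (fun x => (h0 x).2)
  rw [hsplit] at E1 E2
  have hp1 : ∑ i, (c i / dot2 ψ (γ i)) * (perp2 (γ i)).1 = -S₂ := by
    rw [hS₂, ← Finset.sum_neg_distrib]
    exact Finset.sum_congr rfl fun i _ => by simp only [perp2]; ring
  have hp2 : ∑ i, (c i / dot2 ψ (γ i)) * (perp2 (γ i)).2 = S₁ := by
    rw [hS₁]
    exact Finset.sum_congr rfl fun i _ => by simp only [perp2]
  rw [hp1, hp2] at E2
  have hfst : (∑ i, (c i / dot2 ψ (γ i)) • γ i).1 = S₁ := by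
    rw [Prod.fst_sum, hS₁]
    exact Finset.sum_congr rfl fun i _ => by simp [smul_eq_mul]
  have hsnd : (∑ i, (c i / dot2 ψ (γ i)) • γ i).2 = S₂ := by
    rw [Prod.snd_sum, hS₂]
    exact Finset.sum_congr rfl fun i _ => by simp [smul_eq_mul]
  have hnz : S₁ ^ 2 + S₂ ^ 2 ≠ 0 := by
    intro h
    apply hv
    have h1 : S₁ = 0 := by nlinarith [sq_nonneg S₁, sq_nonneg S₂]
    have h2 : S₂ = 0 := by nlinarith [sq_nonneg S₁, sq_nonneg S₂]
    have hz : (∑ i, (c i / dot2 ψ (γ i)) • γ i) = (0 : ℝ × ℝ) := by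
      apply Prod.ext
      · rw [hfst, h1]; rfl
      · rw [hsnd, h2]; rfl
    unfold starGamma
    rw [hz]
    simp
  constructor
  · have h1 : (S₁ ^ 2 + S₂ ^ 2) * J₁ = 0 := by linear_combination S₁ * E1 - S₂ * E2
    exact (mul_eq_zero.1 h1).resolve_left hnz
  · have h2 : (S₁ ^ 2 + S₂ ^ 2) * J₂ = 0 := by linear_combination S₂ * E1 + S₁ * E2
    exact (mul_eq_zero.1 h2).resolve_left hnz

lemma moment_vanish (ψ : ℝ × ℝ) (f : ℝ × ℝ → ℝ) (hfc : Continuous f)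
    (hfs : HasCompactSupport f)
    (hridge : ∀ φ : ℝ → ℝ, ContDiff ℝ 1 φ → HasCompactSupport φ →
      (∫ y : ℝ × ℝ, f y * φ (dot2 y ψ)) = 0)
    (n : ℕ) : (∫ y : ℝ × ℝ, f y * (dot2 y ψ) ^ n) = 0 := by
  obtain ⟨R₀, hR₀⟩ := hfs.isCompact.isBounded.subset_closedBall 0
  set R := max R₀ 0 with hR
  have hRs : tsupport f ⊆ Metric.closedBall 0 R :=
    hR₀.trans (Metric.closedBall_subset_closedBall (le_max_left _ _))
  set D := R * (|ψ.1| + |ψ.2|) + 1 with hD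
  have hDpos : 0 < D := by
    have h1 : (0:ℝ) ≤ R := le_max_right _ _
    have := abs_nonneg ψ.1
    have := abs_nonneg ψ.2
    nlinarith
  set bump : ContDiffBump (0 : ℝ) :=
    ⟨D, D + 1, hDpos, by linarith⟩ with hbump
  set φ : ℝ → ℝ := fun w => bump w * w ^ n with hφdef
  have hφ : ContDiff ℝ 1 φ := (bump.contDiff).mul (contDiff_id.pow n)
  have hφs : HasCompactSupport φ := bump.hasCompactSupport.mul_right
  have heq : ∀ y : ℝ × ℝ, f y * φ (dot2 y ψ) = f y * (dot2 y ψ) ^ n := by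
    intro y
    by_cases hy : f y = 0
    · rw [hy, zero_mul, zero_mul]
    · have hmem : y ∈ tsupport f := subset_tsupport f hy
      have hnorm : ‖y‖ ≤ R := by
        have := hRs hmem
        simpa [Metric.mem_closedBall] using this
      have habs : |dot2 y ψ| ≤ D := by
        refine le_trans (dot2_abs_le y ψ) ?_
        have h1 : (0:ℝ) ≤ R := le_max_right _ _
        have := abs_nonneg ψ.1
        have := abs_nonneg ψ.2
        nlinarith
      have hball : dot2 y ψ ∈ Metric.closedBall (0:ℝ) bump.rIn := by
        simpa [Metric.mem_closedBall, Real.dist_eq] using habs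
      have hone : bump (dot2 y ψ) = 1 := bump.one_of_mem_closedBall hball
      rw [hφdef]
      simp only [hone, one_mul]
  rw [← integral_congr_ae (Filter.Eventually.of_forall heq)]
  exact hridge φ hφ hφs

lemma expand_moment (z : ℝ × ℝ) (f : ℝ × ℝ → ℝ) (hfc : Continuous f)
    (hfs : HasCompactSupport f) (n : ℕ)
    (h : (∫ y : ℝ × ℝ, f y * (dot2 y z) ^ n) = 0) :
    ∑ k ∈ Finset.range (n+1),
      ((n.choose k : ℝ) * (∫ y : ℝ × ℝ, f y * y.1 ^ k * y.2 ^ (n - k))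
        * z.2 ^ (n - k)) * z.1 ^ k = 0 := by
  have hint : ∀ k : ℕ, Integrable (fun y : ℝ × ℝ => f y * y.1 ^ k * y.2 ^ (n - k)) := by
    intro k
    apply Continuous.integrable_of_hasCompactSupport
    · fun_prop
    · exact (hfs.mul_right).mul_right
  have hexp : ∀ y : ℝ × ℝ, f y * (dot2 y z) ^ n
      = ∑ k ∈ Finset.range (n+1),
          ((n.choose k : ℝ) * z.1 ^ k * z.2 ^ (n - k))
            * (f y * y.1 ^ k * y.2 ^ (n - k)) := by
    intro y
    rw [show dot2 y z = y.1 * z.1 + y.2 * z.2 from rfl, add_pow, Finset.mul_sum]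
    exact Finset.sum_congr rfl fun k hk => by ring
  calc ∑ k ∈ Finset.range (n+1),
      ((n.choose k : ℝ) * (∫ y : ℝ × ℝ, f y * y.1 ^ k * y.2 ^ (n - k))
        * z.2 ^ (n - k)) * z.1 ^ k
      = ∑ k ∈ Finset.range (n+1),
        ∫ y : ℝ × ℝ, ((n.choose k : ℝ) * z.1 ^ k * z.2 ^ (n - k))
          * (f y * y.1 ^ k * y.2 ^ (n - k)) := by
        refine Finset.sum_congr rfl fun k hk => ?_
        rw [MeasureTheory.integral_const_mul]
        ring
    _ = ∫ y : ℝ × ℝ, ∑ k ∈ Finset.range (n+1),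
          ((n.choose k : ℝ) * z.1 ^ k * z.2 ^ (n - k))
            * (f y * y.1 ^ k * y.2 ^ (n - k)) := by
        rw [integral_finset_sum _ (fun k _ => (hint k).const_mul _)]
    _ = ∫ y : ℝ × ℝ, f y * (dot2 y z) ^ n := by
        exact integral_congr_ae (Filter.Eventually.of_forall fun y => (hexp y).symm)
    _ = 0 := h

lemma poly_vanish (n : ℕ) (b : ℕ → ℝ) (s : Set ℝ) (hs : s.Infinite)
    (h : ∀ x ∈ s, ∑ k ∈ Finset.range (n+1), b k * x ^ k = 0) :
    ∀ k ≤ n, b k = 0 := by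
  set p : Polynomial ℝ :=
    ∑ k ∈ Finset.range (n+1), Polynomial.C (b k) * Polynomial.X ^ k with hp
  have hev : ∀ x : ℝ, p.eval x = ∑ k ∈ Finset.range (n+1), b k * x ^ k := by
    intro x
    rw [hp, Polynomial.eval_finset_sum]
    exact Finset.sum_congr rfl fun k _ => by simp
  have hroot : {x : ℝ | p.IsRoot x}.Infinite := by
    apply hs.mono
    intro x hx
    simp only [Set.mem_setOf_eq, Polynomial.IsRoot, hev, h x hx]
  have hp0 : p = 0 := p.eq_zero_of_infinite_isRoot hroot
  intro k hk
  have hc : p.coeff k = b k := by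
    rw [hp, Polynomial.finset_sum_coeff]
    simp only [Polynomial.coeff_C_mul, Polynomial.coeff_X_pow]
    rw [Finset.sum_eq_single k]
    · simp
    · intro j _ hj; simp [Ne.symm hj]
    · intro hnk; exact absurd (Finset.mem_range.2 (Nat.lt_succ_of_le hk)) hnk
  rw [hp0] at hc
  simpa using hc.symm

lemma oneD (h : ℝ → ℝ) (hc : Continuous h) (hs : HasCompactSupport h)
    (hm : ∀ k : ℕ, (∫ x : ℝ, h x * x ^ k) = 0) : ∀ x, h x = 0 := by
  obtain ⟨R₀, hR₀⟩ := hs.isCompact.isBounded.subset_closedBall 0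
  set R := max R₀ 1 with hRdef
  have hRpos : (0:ℝ) < R := lt_of_lt_of_le one_pos (le_max_right _ _)
  have hRs : tsupport h ⊆ Set.Icc (-R) R := by
    intro x hx
    have := hR₀ hx
    simp only [Metric.mem_closedBall, Real.dist_eq, sub_zero] at this
    have : |x| ≤ R := le_trans this (le_max_left _ _)
    exact ⟨by linarith [abs_le.1 this |>.1], abs_le.1 this |>.2⟩
  have hzero : ∀ x ∉ Set.Icc (-R) R, h x = 0 := fun x hx =>
    image_eq_zero_of_notMem_tsupport (fun hmem => hx (hRs hmem))
  -- integral against any polynomial vanishes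
  have hpoly : ∀ q : Polynomial ℝ, (∫ x : ℝ, h x * q.eval x) = 0 := by
    intro q
    have hint : ∀ k : ℕ, Integrable (fun x : ℝ => h x * x ^ k) := fun k =>
      Continuous.integrable_of_hasCompactSupport (by fun_prop) hs.mul_right
    have hev : ∀ x : ℝ, h x * q.eval x
        = ∑ k ∈ Finset.range (q.natDegree + 1), q.coeff k * (h x * x ^ k) := by
      intro x
      rw [Polynomial.eval_eq_sum_range, Finset.mul_sum]
      exact Finset.sum_congr rfl fun k _ => by ring
    rw [integral_congr_ae (Filter.Eventually.of_forall hev),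
      integral_finset_sum _ (fun k _ => (hint k).const_mul _)]
    refine Finset.sum_eq_zero fun k _ => ?_
    rw [MeasureTheory.integral_const_mul, hm k, mul_zero]
  -- Weierstrass approximation on Icc
  have hsq : (∫ x : ℝ, h x * h x) = 0 := by
    have hinth : Integrable (fun x : ℝ => h x * h x) :=
      Continuous.integrable_of_hasCompactSupport (hc.mul hc) hs.mul_right
    have hintabs : Integrable (fun x : ℝ => |h x|) :=
      Continuous.integrable_of_hasCompactSupport hc.abs hs.abs
    have key : ∀ ε : ℝ, 0 < ε → (∫ x : ℝ, h x * h x) ≤ ε * ∫ x : ℝ, |h x| := by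
      intro ε hε
      have hcs : CompactSpace (Set.Icc (-R) R) := isCompact_iff_compactSpace.mp isCompact_Icc
      set H : C(Set.Icc (-R) R, ℝ) := ⟨fun x => h x, hc.comp continuous_subtype_val⟩
      have hmem : H ∈ (polynomialFunctions (Set.Icc (-R) R)).topologicalClosure := by
        rw [polynomialFunctions_closure_eq_top]
        trivial
      have hmem' : H ∈ closure
          ((polynomialFunctions (Set.Icc (-R) R) : Set C(Set.Icc (-R) R, ℝ))) := hmem
      obtain ⟨P, hPmem, hPdist⟩ := Metric.mem_closure_iff.1 hmem' ε hε
      have : (P : C(Set.Icc (-R) R, ℝ)) ∈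
          (polynomialFunctions (Set.Icc (-R) R) : Set C(Set.Icc (-R) R, ℝ)) := hPmem
      rw [polynomialFunctions_coe] at this
      obtain ⟨q, hq⟩ := this
      have hqx : ∀ x : Set.Icc (-R) R, q.eval (x : ℝ) = P x := by
        intro x; rw [← hq]; rfl
      have happrox : ∀ x : ℝ, x ∈ Set.Icc (-R) R → |h x - q.eval x| ≤ ε := by
        intro x hx
        have := ContinuousMap.dist_apply_le_dist (f := H) (g := P) ⟨x, hx⟩
        have hlt : dist (H ⟨x, hx⟩) (P ⟨x, hx⟩) ≤ ε := le_of_lt (lt_of_le_of_lt this hPdist)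
        rw [Real.dist_eq] at hlt
        rw [hqx ⟨x, hx⟩]
        exact hlt
      have hsplit : (∫ x : ℝ, h x * h x)
          = (∫ x : ℝ, h x * q.eval x) + ∫ x : ℝ, h x * (h x - q.eval x) := by
        rw [← integral_add]
        · exact integral_congr_ae (Filter.Eventually.of_forall fun x => by ring)
        · exact Continuous.integrable_of_hasCompactSupport
            (hc.mul (Polynomial.continuous q)) hs.mul_right
        · exact Continuous.integrable_of_hasCompactSupport
            (hc.mul (hc.sub (Polynomial.continuous q))) hs.mul_right
      rw [hsplit, hpoly q, zero_add]
      have hb : ∀ x : ℝ, h x * (h x - q.eval x) ≤ ε * |h x| := by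
        intro x
        by_cases hx : x ∈ Set.Icc (-R) R
        · calc h x * (h x - q.eval x) ≤ |h x * (h x - q.eval x)| := le_abs_self _
            _ = |h x| * |h x - q.eval x| := abs_mul _ _
            _ ≤ |h x| * ε := mul_le_mul_of_nonneg_left (happrox x hx) (abs_nonneg _)
            _ = ε * |h x| := mul_comm _ _
        · rw [hzero x hx]; simp [abs_nonneg]
      calc (∫ x : ℝ, h x * (h x - q.eval x)) ≤ ∫ x : ℝ, ε * |h x| := by
            apply integral_mono
            · exact Continuous.integrable_of_hasCompactSupport
                (hc.mul (hc.sub (Polynomial.continuous q))) hs.mul_right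
            · exact hintabs.const_mul ε
            · exact hb
        _ = ε * ∫ x : ℝ, |h x| := MeasureTheory.integral_const_mul _ _
    have hnonneg : 0 ≤ ∫ x : ℝ, h x * h x :=
      integral_nonneg fun x => mul_self_nonneg _
    by_contra hne
    have hpos : 0 < ∫ x : ℝ, h x * h x := lt_of_le_of_ne hnonneg (Ne.symm hne)
    have habs : 0 ≤ ∫ x : ℝ, |h x| := integral_nonneg fun x => abs_nonneg _
    rcases eq_or_lt_of_le habs with heq | hlt
    · have := key 1 one_pos
      rw [← heq] at this
      linarith
    · set ε := (∫ x : ℝ, h x * h x) / (2 * ∫ x : ℝ, |h x|) with hε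
      have hεpos : 0 < ε := by positivity
      have := key ε hεpos
      rw [hε] at this
      have h2 : (∫ x : ℝ, h x * h x) / (2 * ∫ x : ℝ, |h x|) * (∫ x : ℝ, |h x|)
          = (∫ x : ℝ, h x * h x) / 2 := by
        field_simp
      rw [h2] at this
      linarith
  -- conclude h = 0
  have hae : (fun x : ℝ => h x * h x) =ᵐ[volume] 0 := by
    rw [← integral_eq_zero_iff_of_nonneg_ae]
    · exact hsq
    · exact Filter.Eventually.of_forall fun x => mul_self_nonneg _
    · exact Continuous.integrable_of_hasCompactSupport (hc.mul hc) hs.mul_right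
  have hopen : IsOpen {x : ℝ | h x ≠ 0} := isOpen_ne.preimage hc
  have hnull0 : volume {x : ℝ | ¬ (h x * h x = 0)} = 0 := by
    have h' := hae
    rw [Filter.EventuallyEq, ae_iff] at h'
    simpa using h'
  have hnull : volume {x : ℝ | h x ≠ 0} = 0 := by
    refine measure_mono_null ?_ hnull0
    intro x hx
    simp only [Set.mem_setOf_eq] at hx ⊢
    exact fun hcon => hx (by nlinarith [mul_self_nonneg (h x)])
  have hempty : {x : ℝ | h x ≠ 0} = ∅ := hopen.eq_empty_of_measure_zero hnull
  intro x
  by_contra hx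
  exact absurd (Set.eq_empty_iff_forall_notMem.1 hempty x) (fun hmem => hmem hx)

lemma slice_zero (f : ℝ × ℝ → ℝ) (hfc : Continuous f) (hfs : HasCompactSupport f)
    (hm : ∀ k l : ℕ, (∫ y : ℝ × ℝ, f y * y.1 ^ k * y.2 ^ l) = 0) : ∀ y, f y = 0 := by
  obtain ⟨R₀, hR₀⟩ := hfs.isCompact.isBounded.subset_closedBall 0
  set R := max R₀ 1 with hRdef
  have hR1 : (1:ℝ) ≤ R := le_max_right _ _
  have hRpos : (0:ℝ) < R := by linarith
  have hRs : tsupport f ⊆ Metric.closedBall 0 R :=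
    hR₀.trans (Metric.closedBall_subset_closedBall (le_max_left _ _))
  have hout : ∀ y : ℝ × ℝ, R < |y.1| ∨ R < |y.2| → f y = 0 := by
    intro y hy
    apply image_eq_zero_of_notMem_tsupport
    intro hmem
    have hn : ‖y‖ ≤ R := by simpa [Metric.mem_closedBall] using hRs hmem
    have h1 : |y.1| ≤ ‖y‖ := by simpa using norm_fst_le y
    have h2 : |y.2| ≤ ‖y‖ := by simpa using norm_snd_le y
    rcases hy with hy | hy <;> linarith
  obtain ⟨x₀, hx₀⟩ := hfc.abs.exists_forall_ge_of_hasCompactSupport hfs.abs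
  set M := |f x₀| with hM
  have hMnn : 0 ≤ M := abs_nonneg _
  have hMb : ∀ y, |f y| ≤ M := hx₀
  -- slice moments
  set W : ℕ → ℝ → ℝ := fun k y₂ => ∫ y₁ : ℝ, f (y₁, y₂) * y₁ ^ k with hW
  have hWc : ∀ k, Continuous (W k) := by
    intro k
    apply continuous_of_dominated (bound := Set.indicator (Set.Icc (-R) R)
      (fun _ => M * R ^ k))
    · intro y₂
      exact (hfc.comp (by fun_prop) |>.mul (by fun_prop)).aestronglyMeasurable
    · intro y₂
      refine Filter.Eventually.of_forall fun y₁ => ?_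
      by_cases hy : |y₁| ≤ R
      · rw [Set.indicator_of_mem (by exact ⟨by linarith [abs_le.1 hy |>.1],
          abs_le.1 hy |>.2⟩)]
        rw [Real.norm_eq_abs, abs_mul, abs_pow]
        have : |y₁| ^ k ≤ R ^ k := pow_le_pow_left₀ (abs_nonneg _) hy k
        have := hMb (y₁, y₂)
        nlinarith [abs_nonneg (f (y₁, y₂)), pow_nonneg (abs_nonneg y₁) k]
      · have hf0 : f (y₁, y₂) = 0 := hout (y₁, y₂) (Or.inl (by linarith [not_le.1 hy]))
        rw [Set.indicator_of_notMem (by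
          intro hmem
          rcases hmem with ⟨ha, hb⟩
          rcases abs_le.2 ⟨ha, hb⟩ with _
          exact hy (abs_le.2 ⟨ha, hb⟩))]
        simp [hf0]
    · rw [integrable_indicator_iff measurableSet_Icc]
      exact integrableOn_const measure_Icc_lt_top.ne
    · exact Filter.Eventually.of_forall fun y₁ =>
        (hfc.comp (by fun_prop)).mul continuous_const
  have hWs : ∀ k, HasCompactSupport (W k) := by
    intro k
    apply HasCompactSupport.intro (isCompact_Icc (a := -R) (b := R))
    intro y₂ hy₂
    have : ∀ y₁ : ℝ, f (y₁, y₂) * y₁ ^ k = 0 := by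
      intro y₁
      have : R < |y₂| := by
        rcases not_and_or.1 (fun hc => hy₂ (Set.mem_Icc.2 hc)) with hlt | hlt
        · rcases lt_or_ge R |y₂| with h | h
          · exact h
          · exact absurd (by linarith [abs_le.1 h |>.1]) hlt
        · rcases lt_or_ge R |y₂| with h | h
          · exact h
          · exact absurd (abs_le.1 h |>.2) hlt
      rw [hout (y₁, y₂) (Or.inr this), zero_mul]
    simp only [hW, this, integral_zero]
  have hWm : ∀ k l : ℕ, (∫ y₂ : ℝ, W k y₂ * y₂ ^ l) = 0 := by
    intro k l
    have hintf : Integrable (fun y : ℝ × ℝ => f y * y.1 ^ k * y.2 ^ l)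
        ((volume : Measure ℝ).prod (volume : Measure ℝ)) := by
      rw [← MeasureTheory.Measure.volume_eq_prod]
      exact Continuous.integrable_of_hasCompactSupport (by fun_prop)
        ((hfs.mul_right).mul_right)
    have hfub := MeasureTheory.integral_prod_symm _ hintf
    have : (∫ y : ℝ × ℝ, f y * y.1 ^ k * y.2 ^ l) = 0 := hm k l
    rw [MeasureTheory.Measure.volume_eq_prod] at this
    rw [hfub] at this
    rw [← this]
    refine integral_congr_ae (Filter.Eventually.of_forall fun y₂ => ?_)
    rw [hW]
    show (∫ y₁ : ℝ, f (y₁, y₂) * y₁ ^ k) * y₂ ^ l = _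
    rw [← MeasureTheory.integral_mul_const]
  have hWzero : ∀ k, ∀ y₂, W k y₂ = 0 := fun k => oneD (W k) (hWc k) (hWs k) (hWm k)
  intro y
  have hslice : ∀ y₁ : ℝ, f (y₁, y.2) = 0 := by
    apply oneD (fun y₁ => f (y₁, y.2)) (hfc.comp (by fun_prop))
    · apply HasCompactSupport.intro (isCompact_Icc (a := -R) (b := R))
      intro y₁ hy₁
      apply hout (y₁, y.2)
      left
      rcases not_and_or.1 (fun hc => hy₁ (Set.mem_Icc.2 hc)) with hlt | hlt
      · rcases lt_or_ge R |y₁| with h | h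
        · exact h
        · exact absurd (by linarith [abs_le.1 h |>.1]) hlt
      · rcases lt_or_ge R |y₁| with h | h
        · exact h
        · exact absurd (abs_le.1 h |>.2) hlt
    · intro k
      exact hWzero k y.2
  simpa using hslice y.1


lemma moments_zero_of_ridge (f : ℝ × ℝ → ℝ) (hfc : Continuous f)
    (hfs : HasCompactSupport f) (a b a' b' : ℝ) (hab : a < b) (hab' : a' < b')
    (hridge : ∀ z : ℝ × ℝ, z.1 ∈ Set.Ioo a b → z.2 ∈ Set.Ioo a' b' →
      ∀ φ : ℝ → ℝ, ContDiff ℝ 1 φ → HasCompactSupport φ →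
        (∫ y : ℝ × ℝ, f y * φ (dot2 y z)) = 0) :
    ∀ y, f y = 0 := by
  apply slice_zero f hfc hfs
  intro k l
  set n := k + l with hn
  have hkn : k ≤ n := Nat.le_add_right _ _
  have hnk : n - k = l := by omega
  have hdir : ∀ z : ℝ × ℝ, z.1 ∈ Set.Ioo a b → z.2 ∈ Set.Ioo a' b' →
      ∀ n' : ℕ, (∫ y : ℝ × ℝ, f y * (dot2 y z) ^ n') = 0 :=
    fun z h1 h2 n' => moment_vanish z f hfc hfs (hridge z h1 h2) n'
  obtain ⟨z₂, hz₂mem, hz₂ne⟩ : ∃ z₂, z₂ ∈ Set.Ioo a' b' ∧ z₂ ≠ 0 := by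
    obtain ⟨z₂, hz₂⟩ := ((Set.Ioo_infinite hab').diff (Set.finite_singleton 0)).nonempty
    exact ⟨z₂, hz₂.1, by simpa using hz₂.2⟩
  have h1 : ∀ z₁ ∈ Set.Ioo a b, ∑ k' ∈ Finset.range (n+1),
      ((n.choose k' : ℝ) * (∫ y : ℝ × ℝ, f y * y.1 ^ k' * y.2 ^ (n - k'))
        * z₂ ^ (n - k')) * z₁ ^ k' = 0 := by
    intro z₁ hz₁
    exact expand_moment (z₁, z₂) f hfc hfs n (hdir (z₁, z₂) hz₁ hz₂mem n)
  have h2 := poly_vanish n _ _ (Set.Ioo_infinite hab) h1 k hkn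
  rw [hnk] at h2
  have hch : ((n.choose k : ℝ)) ≠ 0 := Nat.cast_ne_zero.2 (Nat.choose_pos hkn).ne'
  have hz2p : z₂ ^ l ≠ 0 := pow_ne_zero _ hz₂ne
  rcases mul_eq_zero.1 h2 with h3 | h3
  · rcases mul_eq_zero.1 h3 with h4 | h4
    · exact absurd h4 hch
    · exact h4
  · exact absurd h3 hz2p


/-- if some unit `ψ` has `ψ·γᵢ ≠ 0` for all `i` and `γ(ψ) ≠ 0`,
then `S f ≡ 0` implies `f ≡ 0`. -/
theorem stmt7 (m : ℕ) (γ : Fin m → ℝ × ℝ) (c : Fin m → ℝ)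
    (hγu : ∀ i, (γ i).1 ^ 2 + (γ i).2 ^ 2 = 1) (hγd : Function.Injective γ)
    (hc : ∀ i, c i ≠ 0)
    (f₁ f₂ : ℝ × ℝ → ℝ) (hf₁ : IsC2c f₁) (hf₂ : IsC2c f₂)
    (hψ : ∃ ψ : ℝ × ℝ, ψ.1 ^ 2 + ψ.2 ^ 2 = 1 ∧ (∀ i, dot2 ψ (γ i) ≠ 0) ∧
      starGamma m γ c ψ ≠ 0)
    (hS : ∀ x, starS m γ c f₁ f₂ x = 0) :
    ∀ x, f₁ x = 0 ∧ f₂ x = 0 := by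
  obtain ⟨ψ₀, hunit, hd0, hv0⟩ := hψ
  have hf₁c : Continuous f₁ := hf₁.1.continuous
  have hf₁s : HasCompactSupport f₁ := hf₁.2
  have hf₂c : Continuous f₂ := hf₂.1.continuous
  have hf₂s : HasCompactSupport f₂ := hf₂.2
  -- the set of good directions is open
  set V : Set (ℝ × ℝ) := ⋂ i, {z : ℝ × ℝ | dot2 z (γ i) ≠ 0} with hV
  have hVopen : IsOpen V :=
    isOpen_iInter_of_finite fun i => isOpen_ne.preimage (continuous_dot2 (γ i))
  have hVmem : ∀ z ∈ V, ∀ i, dot2 z (γ i) ≠ 0 := by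
    intro z hz i
    exact Set.mem_iInter.1 hz i
  have hgcont : ContinuousOn (starGamma m γ c) V := by
    unfold starGamma
    apply ContinuousOn.neg
    apply continuousOn_finset_sum
    intro i _
    apply ContinuousOn.fun_smul _ continuousOn_const
    exact continuousOn_const.div (continuous_dot2 (γ i)).continuousOn
      (fun z hz => hVmem z hz i)
  set U : Set (ℝ × ℝ) := V ∩ (starGamma m γ c) ⁻¹' ({0}ᶜ) with hU
  have hUopen : IsOpen U := hgcont.isOpen_inter_preimage hVopen isOpen_compl_singleton
  have hψU : ψ₀ ∈ U := by
    constructor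
    · exact Set.mem_iInter.2 hd0
    · exact hv0
  have hUgood : ∀ z ∈ U, (∀ i, dot2 z (γ i) ≠ 0) ∧ starGamma m γ c z ≠ 0 := by
    intro z hz
    exact ⟨hVmem z hz.1, hz.2⟩
  -- extract an open box inside U
  obtain ⟨u, v, huo, hvo, hu1, hv1, huv⟩ :=
    isOpen_prod_iff.1 hUopen ψ₀.1 ψ₀.2 (by simpa using hψU)
  obtain ⟨ε₁, hε₁, hball₁⟩ := Metric.isOpen_iff.1 huo ψ₀.1 hu1
  obtain ⟨ε₂, hε₂, hball₂⟩ := Metric.isOpen_iff.1 hvo ψ₀.2 hv1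
  set a := ψ₀.1 - ε₁
  set b := ψ₀.1 + ε₁
  set a' := ψ₀.2 - ε₂
  set b' := ψ₀.2 + ε₂
  have hab : a < b := by simp only [a, b]; linarith
  have hab' : a' < b' := by simp only [a', b']; linarith
  have hIoo1 : Set.Ioo a b ⊆ u := by
    rw [show Set.Ioo a b = Metric.ball ψ₀.1 ε₁ from (Real.ball_eq_Ioo _ _).symm]
    exact hball₁
  have hIoo2 : Set.Ioo a' b' ⊆ v := by
    rw [show Set.Ioo a' b' = Metric.ball ψ₀.2 ε₂ from (Real.ball_eq_Ioo _ _).symm]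
    exact hball₂
  have hboxU : ∀ z : ℝ × ℝ, z.1 ∈ Set.Ioo a b → z.2 ∈ Set.Ioo a' b' → z ∈ U := by
    intro z h1 h2
    have : (z.1, z.2) ∈ u ×ˢ v := ⟨hIoo1 h1, hIoo2 h2⟩
    simpa using huv this
  -- ridge integrals vanish for all directions in the box
  have hridge : ∀ z : ℝ × ℝ, z.1 ∈ Set.Ioo a b → z.2 ∈ Set.Ioo a' b' →
      ∀ φ : ℝ → ℝ, ContDiff ℝ 1 φ → HasCompactSupport φ →
        (∫ y : ℝ × ℝ, f₁ y * φ (dot2 y z)) = 0 ∧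
        (∫ y : ℝ × ℝ, f₂ y * φ (dot2 y z)) = 0 := by
    intro z h1 h2 φ hφ hφs
    obtain ⟨hdz, hvz⟩ := hUgood z (hboxU z h1 h2)
    exact ridge_vanish m γ c f₁ f₂ hf₁c hf₁s hf₂c hf₂s hS z hdz hvz φ hφ hφs
  have hzero₁ : ∀ y, f₁ y = 0 :=
    moments_zero_of_ridge f₁ hf₁c hf₁s a b a' b' hab hab'
      (fun z h1 h2 φ hφ hφs => (hridge z h1 h2 φ hφ hφs).1)
  have hzero₂ : ∀ y, f₂ y = 0 :=
    moments_zero_of_ridge f₂ hf₂c hf₂s a b a' b' hab hab'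
      (fun z h1 h2 φ hφ hφs => (hridge z h1 h2 φ hφ hφs).2)
  exact fun x => ⟨hzero₁ x, hzero₂ x⟩
end
end
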